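/- arXiv:0710.2347 — 4 statements merged into one kernel-verified Lean document; each statement's English description precedes it below -/
import Mathlib

section
/- Let S be a countable set of positive reals. Then the ordered ultrametric space (Q_S, <_lex) is ultrahomogeneous: every order-preserving isometry between finite subsets of Q_S extends to a bijective order-preserving self-isometry of (Q_S, <_lex). -/
/-- The Urysohn ultrametric space `Q_S` : finitely supported functions `S → ℚ`. -/
def QS (S : Set ℝ) := {x : S → ℚ // {s : S | x s ≠ 0}.Finite}

/-- The distance on `Q_S` : `d x y = max {s ∈ S | x s ≠ y s}` for `x ≠ y`
(and `0` for `x = y`, the supremum of the empty set being `0`). -/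
noncomputable def dQ (S : Set ℝ) (x y : S → ℚ) : ℝ :=
  sSup (Subtype.val '' {s : S | x s ≠ y s})

/-- The lexicographical ordering on `Q_S` : `x <lex y` iff `x s < y s` where `s` is the
largest element of `S` at which `x` and `y` differ. -/
def lexQ (S : Set ℝ) (x y : S → ℚ) : Prop :=
  ∃ s : S, x s < y s ∧ ∀ t : S, (s : ℝ) < (t : ℝ) → x t = y t

/-- `r` is a strict total order (irreflexive, transitive, trichotomous). -/
def IsSTO {X : Type*} (r : X → X → Prop) : Prop :=
  (∀ x, ¬ r x x) ∧ (∀ x y z, r x y → r y z → r x z) ∧ (∀ x y, r x y ∨ x = y ∨ r y x)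

/-- `r` is a convex linear ordering with respect to the distance `d` : a strict total
order for which every closed metric ball is an interval (equivalently,
`r x y → r y z → d x y ≤ d x z ∧ d y z ≤ d x z`). -/
def IsConvexSTO {X : Type*} (d : X → X → ℝ) (r : X → X → Prop) : Prop :=
  IsSTO r ∧ ∀ x y z, r x y → r y z → d x y ≤ d x z ∧ d y z ≤ d x z


namespace QSaux

variable {S : Set ℝ}

/-- `m` is the largest coordinate where `x` and `y` differ. -/
def Top (x y : QS S) (m : S) : Prop :=
  x.1 m ≠ y.1 m ∧ ∀ t : S, (m : ℝ) < (t : ℝ) → x.1 t = y.1 t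

lemma diffs_finite (x y : QS S) : {s : S | x.1 s ≠ y.1 s}.Finite := by
  refine (x.2.union y.2).subset ?_
  intro s hs
  by_contra h
  simp only [Set.mem_union, Set.mem_setOf_eq, not_or, not_not] at h
  exact hs (by simp [h.1, h.2] : x.1 s = y.1 s)

lemma ne_iff {x y : QS S} : x ≠ y ↔ ∃ s, x.1 s ≠ y.1 s := by
  constructor
  · intro h
    by_contra hc
    push_neg at hc
    exact h (Subtype.ext (funext hc))
  · rintro ⟨s, hs⟩ rfl; exact hs rfl

lemma exists_top {x y : QS S} (h : x ≠ y) : ∃ m, Top x y m := by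
  obtain ⟨s, hs⟩ := ne_iff.1 h
  obtain ⟨m, hm, hmax⟩ := Set.Finite.exists_maximalFor (fun t : S => (t : ℝ))
    _ (diffs_finite x y) ⟨s, hs⟩
  refine ⟨m, hm, fun t ht => ?_⟩
  by_contra hne
  exact absurd (hmax hne ht.le) (not_le.2 ht)

lemma top_le {x y : QS S} {m : S} (htop : Top x y m) {s : S} (h : x.1 s ≠ y.1 s) :
    (s : ℝ) ≤ (m : ℝ) := by
  by_contra hc
  exact h (htop.2 s (lt_of_not_ge hc))

lemma top_unique {x y : QS S} {m m' : S} (h : Top x y m) (h' : Top x y m') : m = m' :=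
  Subtype.ext (le_antisymm (top_le h' h.1) (top_le h h'.1))

lemma top_symm {x y : QS S} {m : S} (h : Top x y m) : Top y x m :=
  ⟨Ne.symm h.1, fun t ht => (h.2 t ht).symm⟩

lemma dQ_top {x y : QS S} {m : S} (htop : Top x y m) : dQ S x.1 y.1 = (m : ℝ) := by
  have hbdd : ∀ r ∈ Subtype.val '' {s : S | x.1 s ≠ y.1 s}, r ≤ (m : ℝ) := by
    rintro r ⟨s, hs, rfl⟩; exact top_le htop hs
  refine le_antisymm (csSup_le ⟨m, m, htop.1, rfl⟩ hbdd) (le_csSup ⟨m, hbdd⟩ ⟨m, htop.1, rfl⟩)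

lemma dQ_self (x : QS S) : dQ S x.1 x.1 = 0 := by
  have : {s : S | x.1 s ≠ x.1 s} = ∅ := by ext s; simp
  simp [dQ, this, Real.sSup_empty]

lemma dQ_comm (x y : QS S) : dQ S x.1 y.1 = dQ S y.1 x.1 := by
  unfold dQ
  congr 1
  ext s
  simp [ne_comm]

lemma dQ_pos (hSpos : ∀ s ∈ S, 0 < s) {x y : QS S} (h : x ≠ y) : 0 < dQ S x.1 y.1 := by
  obtain ⟨m, hm⟩ := exists_top h
  rw [dQ_top hm]
  exact hSpos m m.2

lemma dQ_nonneg (hSpos : ∀ s ∈ S, 0 < s) (x y : QS S) : 0 ≤ dQ S x.1 y.1 := by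
  rcases eq_or_ne x y with rfl | h
  · rw [dQ_self]
  · exact (dQ_pos hSpos h).le

lemma eq_of_dQ_eq_zero (hSpos : ∀ s ∈ S, 0 < s) {x y : QS S}
    (h : dQ S x.1 y.1 = 0) : x = y := by
  by_contra hc
  exact absurd h (ne_of_gt (dQ_pos hSpos hc))

lemma le_dQ {x y : QS S} {s : S} (h : x.1 s ≠ y.1 s) : (s : ℝ) ≤ dQ S x.1 y.1 := by
  have hne : x ≠ y := ne_iff.2 ⟨s, h⟩
  obtain ⟨m, hm⟩ := exists_top hne
  rw [dQ_top hm]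
  exact top_le hm h

lemma eq_of_dQ_lt {x y : QS S} {s : S} (h : dQ S x.1 y.1 < (s : ℝ)) : x.1 s = y.1 s := by
  by_contra hc
  exact absurd (le_dQ hc) (not_le.2 h)

lemma lex_top_iff {x y : QS S} {m : S} (htop : Top x y m) :
    lexQ S x.1 y.1 ↔ x.1 m < y.1 m := by
  constructor
  · rintro ⟨s, hs, hst⟩
    have : Top x y s := ⟨ne_of_lt hs, hst⟩
    rwa [top_unique htop this]
  · intro h
    exact ⟨m, h, htop.2⟩

lemma lex_irrefl (x : QS S) : ¬ lexQ S x.1 x.1 := by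
  rintro ⟨s, hs, -⟩; exact lt_irrefl _ hs

lemma lex_total {x y : QS S} (h : x ≠ y) : lexQ S x.1 y.1 ∨ lexQ S y.1 x.1 := by
  obtain ⟨m, hm⟩ := exists_top h
  rcases lt_or_gt_of_ne hm.1 with hlt | hgt
  · exact Or.inl ((lex_top_iff hm).2 hlt)
  · exact Or.inr ((lex_top_iff (top_symm hm)).2 hgt)

lemma lex_asymm {x y : QS S} (h : lexQ S x.1 y.1) : ¬ lexQ S y.1 x.1 := by
  obtain ⟨s, hs, hst⟩ := h
  rintro ⟨s', hs', hst'⟩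
  have h1 : Top x y s := ⟨ne_of_lt hs, hst⟩
  have h2 : Top x y s' := top_symm ⟨ne_of_lt hs', hst'⟩
  rw [top_unique h1 h2] at hs
  exact lt_irrefl _ (hs.trans hs')

lemma lex_not_iff {x y : QS S} (h : x ≠ y) : lexQ S y.1 x.1 ↔ ¬ lexQ S x.1 y.1 := by
  constructor
  · exact fun hl => fun hl' => lex_asymm hl' hl
  · intro hn
    rcases lex_total h with hl | hl
    · exact absurd hl hn
    · exact hl

end QSaux

def PIso (S : Set ℝ) (P : Set (QS S × QS S)) : Prop :=
  ∀ p ∈ P, ∀ q ∈ P,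
    dQ S p.2.1 q.2.1 = dQ S p.1.1 q.1.1 ∧ (lexQ S p.2.1 q.2.1 ↔ lexQ S p.1.1 q.1.1)

namespace QSaux

variable {S : Set ℝ}

lemma top_of_dQ_eq {x b : QS S} {m : S} (h : x ≠ b) (hd : dQ S x.1 b.1 = (m : ℝ)) :
    Top x b m := by
  obtain ⟨m', hm'⟩ := exists_top h
  have hval : (m' : ℝ) = (m : ℝ) := (dQ_top hm').symm.trans hd
  rwa [show m' = m from Subtype.ext hval] at hm'

lemma dQ_le_of_eq_above (hSpos : ∀ s ∈ S, 0 < s) {a b : QS S} {m : S}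
    (h : ∀ t : S, (m : ℝ) < (t : ℝ) → a.1 t = b.1 t) : dQ S a.1 b.1 ≤ (m : ℝ) := by
  rcases eq_or_ne a b with rfl | hne
  · rw [dQ_self]; exact (hSpos m m.2).le
  · obtain ⟨m', hm'⟩ := exists_top hne
    rw [dQ_top hm']
    by_contra hc
    exact hm'.1 (h m' (lt_of_not_ge hc))

lemma exists_rat_sep (L U : Finset ℚ) (h : ∀ l ∈ L, ∀ u ∈ U, l < u) :
    ∃ q : ℚ, (∀ l ∈ L, l < q) ∧ ∀ u ∈ U, q < u := by
  rcases L.eq_empty_or_nonempty with rfl | hL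
  · rcases U.eq_empty_or_nonempty with rfl | hU
    · exact ⟨0, by simp, by simp⟩
    · refine ⟨U.min' hU - 1, by simp, fun u hu => ?_⟩
      have := U.min'_le u hu; linarith
  · rcases U.eq_empty_or_nonempty with rfl | hU
    · refine ⟨L.max' hL + 1, fun l hl => ?_, by simp⟩
      have := L.le_max' l hl; linarith
    · have hlt : L.max' hL < U.min' hU := h _ (L.max'_mem hL) _ (U.min'_mem hU)
      obtain ⟨q, h1, h2⟩ := exists_between hlt
      exact ⟨q, fun l hl => lt_of_le_of_lt (L.le_max' l hl) h1,
        fun u hu => lt_of_lt_of_le h2 (U.min'_le u hu)⟩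

lemma extend_dom (hSpos : ∀ s ∈ S, 0 < s) {P : Set (QS S × QS S)} (hfin : P.Finite)
    (hP : PIso S P) (x : QS S) : ∃ y, PIso S (insert (x, y) P) := by
  classical
  by_cases hx : ∃ y0, (x, y0) ∈ P
  · obtain ⟨y0, h0⟩ := hx
    exact ⟨y0, by rwa [Set.insert_eq_self.2 h0]⟩
  push_neg at hx
  rcases P.eq_empty_or_nonempty with rfl | hne
  · refine ⟨x, ?_⟩
    intro p hp q hq
    simp only [Set.mem_insert_iff, Set.mem_empty_iff_false, or_false] at hp hq
    subst hp; subst hq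
    exact ⟨rfl, Iff.rfl⟩
  obtain ⟨p0, hp0, hmin⟩ := Set.exists_min_image P (fun p => dQ S x.1 p.1.1) hfin hne
  obtain ⟨a, fa⟩ := p0
  have hxa : x ≠ a := by rintro rfl; exact hx fa hp0
  obtain ⟨m, hm⟩ := exists_top hxa
  have hda : dQ S x.1 a.1 = (m : ℝ) := dQ_top hm
  have hminm : ∀ p ∈ P, (m : ℝ) ≤ dQ S x.1 p.1.1 := by
    intro p hp
    have := hmin p hp
    simpa [hda] using this
  have hxne : ∀ p ∈ P, x ≠ p.1 := by
    intro p hp h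
    refine hx p.2 ?_
    rw [show (x, p.2) = p from by rw [h]]
    exact hp
  have hB : ∀ p ∈ P, dQ S x.1 p.1.1 = (m : ℝ) → Top x p.1 m :=
    fun p hp hd => top_of_dQ_eq (hxne p hp) hd
  set L : Finset ℚ := (hfin.toFinset.filter
    (fun p => dQ S x.1 p.1.1 = (m : ℝ) ∧ p.1.1 m < x.1 m)).image (fun p => p.2.1 m) with hLdef
  set U : Finset ℚ := (hfin.toFinset.filter
    (fun p => dQ S x.1 p.1.1 = (m : ℝ) ∧ x.1 m < p.1.1 m)).image (fun p => p.2.1 m) with hUdef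
  have hLU : ∀ l ∈ L, ∀ u ∈ U, l < u := by
    intro l hl u hu
    rw [hLdef] at hl; rw [hUdef] at hu
    simp only [Finset.mem_image, Finset.mem_filter, Set.Finite.mem_toFinset] at hl hu
    obtain ⟨p, ⟨hpP, hpd, hplt⟩, rfl⟩ := hl
    obtain ⟨p', ⟨hp'P, hp'd, hp'lt⟩, rfl⟩ := hu
    have h1 : Top x p.1 m := hB p hpP hpd
    have h2 : Top x p'.1 m := hB p' hp'P hp'd
    have hbb' : Top p.1 p'.1 m :=
      ⟨ne_of_lt (hplt.trans hp'lt), fun t ht => (h1.2 t ht).symm.trans (h2.2 t ht)⟩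
    have hd : dQ S p.1.1 p'.1.1 = (m : ℝ) := dQ_top hbb'
    obtain ⟨hdf, hlf⟩ := hP p hpP p' hp'P
    have hne' : p.2 ≠ p'.2 := by
      intro hE
      have h0 := hdf.trans hd
      rw [hE, dQ_self] at h0
      exact absurd h0.symm (ne_of_gt (hSpos m m.2))
    have hTf : Top p.2 p'.2 m := top_of_dQ_eq hne' (hdf.trans hd)
    exact (lex_top_iff hTf).1 (hlf.2 ((lex_top_iff hbb').2 (hplt.trans hp'lt)))
  obtain ⟨q0, hq0L, hq0U⟩ := exists_rat_sep L U hLU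
  have hq0lt : ∀ p ∈ P, dQ S x.1 p.1.1 = (m : ℝ) → p.1.1 m < x.1 m → p.2.1 m < q0 := by
    intro p hp h1 h2
    refine hq0L _ ?_
    rw [hLdef]
    exact Finset.mem_image.2 ⟨p, Finset.mem_filter.2 ⟨hfin.mem_toFinset.2 hp, h1, h2⟩, rfl⟩
  have hq0gt : ∀ p ∈ P, dQ S x.1 p.1.1 = (m : ℝ) → x.1 m < p.1.1 m → q0 < p.2.1 m := by
    intro p hp h1 h2
    refine hq0U _ ?_
    rw [hUdef]
    exact Finset.mem_image.2 ⟨p, Finset.mem_filter.2 ⟨hfin.mem_toFinset.2 hp, h1, h2⟩, rfl⟩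
  have hyfin : {s : S | Function.update fa.1 m q0 s ≠ 0}.Finite := by
    refine (fa.2.insert m).subset ?_
    intro s hs
    by_cases hsm : s = m
    · exact Set.mem_insert_iff.2 (Or.inl hsm)
    · rw [Set.mem_setOf_eq, Function.update_of_ne hsm] at hs
      exact Set.mem_insert_iff.2 (Or.inr hs)
  set y : QS S := ⟨Function.update fa.1 m q0, hyfin⟩ with hy
  have hym : y.1 m = q0 := Function.update_self _ _ _
  have hyt : ∀ t : S, t ≠ m → y.1 t = fa.1 t := fun t ht => Function.update_of_ne ht _ _
  have key : ∀ p ∈ P,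
      dQ S y.1 p.2.1 = dQ S x.1 p.1.1 ∧ (lexQ S y.1 p.2.1 ↔ lexQ S x.1 p.1.1) := by
    intro p hp
    obtain ⟨hdf, hlf⟩ := hP (a, fa) hp0 p hp
    rcases eq_or_lt_of_le (hminm p hp) with hcase | hcase
    · -- d(x, b) = m
      have hTxb : Top x p.1 m := hB p hp hcase.symm
      have hab : ∀ t : S, (m : ℝ) < (t : ℝ) → a.1 t = p.1.1 t :=
        fun t ht => (hm.2 t ht).symm.trans (hTxb.2 t ht)
      have hdab : dQ S a.1 p.1.1 ≤ (m : ℝ) := dQ_le_of_eq_above hSpos hab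
      have hdfab : dQ S fa.1 p.2.1 ≤ (m : ℝ) := by rw [hdf]; exact hdab
      have hfab : ∀ t : S, (m : ℝ) < (t : ℝ) → fa.1 t = p.2.1 t :=
        fun t ht => eq_of_dQ_lt (lt_of_le_of_lt hdfab ht)
      have hq0ne : q0 ≠ p.2.1 m ∧ (x.1 m < p.1.1 m ↔ q0 < p.2.1 m) := by
        rcases lt_or_gt_of_ne hTxb.1 with hlt | hgt
        · have h2 := hq0gt p hp hcase.symm hlt
          exact ⟨ne_of_lt h2, iff_of_true hlt h2⟩
        · have h2 := hq0lt p hp hcase.symm hgt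
          exact ⟨ne_of_gt h2, iff_of_false (not_lt.2 hgt.le) (not_lt.2 h2.le)⟩
      have hTy : Top y p.2 m := by
        refine ⟨by rw [hym]; exact hq0ne.1, fun t ht => ?_⟩
        have htne : t ≠ m := by
          intro hE; rw [hE] at ht; exact lt_irrefl _ ht
        rw [hyt t htne]
        exact hfab t ht
      refine ⟨(dQ_top hTy).trans hcase, ?_⟩
      rw [lex_top_iff hTy, lex_top_iff hTxb, hym]
      exact hq0ne.2.symm
    · -- m < d(x, b)
      have hxb : x ≠ p.1 := hxne p hp
      obtain ⟨m', hm'⟩ := exists_top hxb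
      have hdm' : dQ S x.1 p.1.1 = (m' : ℝ) := dQ_top hm'
      have hmm' : (m : ℝ) < (m' : ℝ) := by rw [← hdm']; exact hcase
      have hxam : ∀ t : S, (m : ℝ) < (t : ℝ) → x.1 t = a.1 t :=
        fun t ht => eq_of_dQ_lt (by rw [hda]; exact ht)
      have hTab : Top a p.1 m' := by
        refine ⟨by rw [← hxam m' hmm']; exact hm'.1, fun t ht => ?_⟩
        rw [← hxam t (hmm'.trans ht)]
        exact hm'.2 t ht
      have hdab : dQ S a.1 p.1.1 = (m' : ℝ) := dQ_top hTab
      have hfane : fa ≠ p.2 := by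
        intro hE
        have h0 := hdf.trans hdab
        rw [hE, dQ_self] at h0
        exact absurd h0.symm (ne_of_gt (hSpos m' m'.2))
      have hTfab : Top fa p.2 m' := top_of_dQ_eq hfane (hdf.trans hdab)
      have hm'ne : m' ≠ m := by
        intro hE; rw [hE] at hmm'; exact lt_irrefl _ hmm'
      have hym' : y.1 m' = fa.1 m' := hyt m' hm'ne
      have hTy : Top y p.2 m' := by
        refine ⟨by rw [hym']; exact hTfab.1, fun t ht => ?_⟩
        have htne : t ≠ m := by
          intro hE
          rw [hE] at ht
          exact lt_irrefl _ (hmm'.trans ht)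
        rw [hyt t htne]
        exact hTfab.2 t ht
      refine ⟨by rw [dQ_top hTy, hdm'], ?_⟩
      rw [lex_top_iff hTy, lex_top_iff hm', hym', ← lex_top_iff hTfab, hlf,
        lex_top_iff hTab, ← hxam m' hmm']
  refine ⟨y, ?_⟩
  intro p hp q hq
  rcases Set.mem_insert_iff.1 hp with hp1 | hp1 <;>
    rcases Set.mem_insert_iff.1 hq with hq1 | hq1
  · subst hp1; subst hq1
    constructor
    · show dQ S y.1 y.1 = dQ S x.1 x.1
      rw [dQ_self, dQ_self]
    · exact iff_of_false (lex_irrefl y) (lex_irrefl x)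
  · subst hp1
    exact key q hq1
  · subst hq1
    obtain ⟨hd, hl⟩ := key p hp1
    constructor
    · show dQ S p.2.1 y.1 = dQ S p.1.1 x.1
      rw [dQ_comm p.2 y, dQ_comm p.1 x]
      exact hd
    · show lexQ S p.2.1 y.1 ↔ lexQ S p.1.1 x.1
      have hxp : x ≠ p.1 := hxne p hp1
      have hyp : y ≠ p.2 := by
        intro hE
        rw [← hE, dQ_self] at hd
        exact absurd hd.symm (ne_of_gt (dQ_pos hSpos hxp))
      rw [lex_not_iff hyp, lex_not_iff hxp, hl]
  · exact hP p hp1 q hq1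

end QSaux

namespace QSaux

variable {S : Set ℝ}

lemma PIso_swap {P : Set (QS S × QS S)} (h : PIso S P) : PIso S (Prod.swap '' P) := by
  rintro _ ⟨p, hp, rfl⟩ _ ⟨q, hq, rfl⟩
  obtain ⟨hd, hl⟩ := h p hp q hq
  exact ⟨hd.symm, hl.symm⟩

lemma extend_ran (hSpos : ∀ s ∈ S, 0 < s) {P : Set (QS S × QS S)} (hfin : P.Finite)
    (hP : PIso S P) (y : QS S) : ∃ z, PIso S (insert (z, y) P) := by
  obtain ⟨z, hz⟩ := extend_dom hSpos (hfin.image Prod.swap) (PIso_swap hP) y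
  refine ⟨z, ?_⟩
  have h2 := PIso_swap hz
  rw [Set.image_insert_eq] at h2
  have h3 : Prod.swap '' (Prod.swap '' P) = P := by
    rw [Set.image_image]; simp
  rw [h3] at h2
  exact h2

lemma countable_QS (hScount : S.Countable) : Countable (QS S) := by
  haveI : Countable S := hScount.to_subtype
  have hinj : Function.Injective
      (fun x : QS S => (⟨x.2.toFinset, x.1, by
        intro s; rw [Set.Finite.mem_toFinset]; exact Iff.rfl⟩ : S →₀ ℚ)) := by
    intro x y h
    have := congrArg (fun g : S →₀ ℚ => (g : S → ℚ)) h
    exact Subtype.ext this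
  exact hinj.countable

theorem PIso_extension (hSpos : ∀ s ∈ S, 0 < s) (hScount : S.Countable)
    (P0 : Set (QS S × QS S)) (h0fin : P0.Finite) (h0 : PIso S P0) :
    ∃ g : QS S ≃ QS S,
      (∀ x y : QS S, dQ S (g x).1 (g y).1 = dQ S x.1 y.1) ∧
      (∀ x y : QS S, lexQ S (g x).1 (g y).1 ↔ lexQ S x.1 y.1) ∧
      ∀ p ∈ P0, g p.1 = p.2 := by
  classical
  haveI : Countable (QS S) := countable_QS hScount
  haveI : Nonempty (QS S) := ⟨⟨fun _ => 0, by simp⟩⟩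
  obtain ⟨e, he⟩ := exists_surjective_nat (QS S)
  have hstep : ∀ (n : ℕ) (P : Set (QS S × QS S)), P.Finite → PIso S P →
      ∃ Q : Set (QS S × QS S), P ⊆ Q ∧ Q.Finite ∧ PIso S Q ∧
        ((n % 2 = 0 → ∃ y, (e (n / 2), y) ∈ Q) ∧ (n % 2 ≠ 0 → ∃ z, (z, e (n / 2)) ∈ Q)) := by
    intro n P hf hp
    by_cases hn : n % 2 = 0
    · obtain ⟨y, hy⟩ := extend_dom hSpos hf hp (e (n / 2))
      exact ⟨insert (e (n / 2), y) P, Set.subset_insert _ _, hf.insert _, hy,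
        fun _ => ⟨y, Set.mem_insert _ _⟩, fun h => absurd hn h⟩
    · obtain ⟨z, hz⟩ := extend_ran hSpos hf hp (e (n / 2))
      exact ⟨insert (z, e (n / 2)) P, Set.subset_insert _ _, hf.insert _, hz,
        fun h => absurd h hn, fun _ => ⟨z, Set.mem_insert _ _⟩⟩
  choose Q hQsub hQfin hQpiso hQdom hQran using hstep
  let C : ℕ → {P : Set (QS S × QS S) // P.Finite ∧ PIso S P} := fun n =>
    Nat.rec ⟨P0, h0fin, h0⟩
      (fun n prev => ⟨Q n prev.1 prev.2.1 prev.2.2,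
        hQfin n prev.1 prev.2.1 prev.2.2, hQpiso n prev.1 prev.2.1 prev.2.2⟩) n
  have hC1 : ∀ n, (C n).1 ⊆ (C (n + 1)).1 := fun n =>
    hQsub n (C n).1 (C n).2.1 (C n).2.2
  have hCdom : ∀ n, n % 2 = 0 → ∃ y, (e (n / 2), y) ∈ (C (n + 1)).1 := fun n =>
    hQdom n (C n).1 (C n).2.1 (C n).2.2
  have hCran : ∀ n, n % 2 ≠ 0 → ∃ z, (z, e (n / 2)) ∈ (C (n + 1)).1 := fun n =>
    hQran n (C n).1 (C n).2.1 (C n).2.2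
  have hmono : ∀ m n, m ≤ n → (C m).1 ⊆ (C n).1 := by
    intro m n hmn
    induction hmn with
    | refl => exact Set.Subset.rfl
    | step _ ih => exact ih.trans (hC1 _)
  set Un : Set (QS S × QS S) := ⋃ n, (C n).1 with hUn
  have hmemU : ∀ n, (C n).1 ⊆ Un := fun n => Set.subset_iUnion (fun n => (C n).1) n
  have hUpiso : PIso S Un := by
    intro p hp q hq
    obtain ⟨n1, hn1⟩ := Set.mem_iUnion.1 hp
    obtain ⟨n2, hn2⟩ := Set.mem_iUnion.1 hq
    exact (C (max n1 n2)).2.2 p (hmono n1 _ (le_max_left _ _) hn1)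
      q (hmono n2 _ (le_max_right _ _) hn2)
  have htotdom : ∀ x : QS S, ∃ y, (x, y) ∈ Un := by
    intro x
    obtain ⟨k, rfl⟩ := he x
    obtain ⟨y, hy⟩ := hCdom (2 * k) (by omega)
    have hdiv : 2 * k / 2 = k := by omega
    rw [hdiv] at hy
    exact ⟨y, hmemU (2 * k + 1) hy⟩
  have htotran : ∀ y : QS S, ∃ x, (x, y) ∈ Un := by
    intro y
    obtain ⟨k, rfl⟩ := he y
    obtain ⟨z, hz⟩ := hCran (2 * k + 1) (by omega)
    have hdiv : (2 * k + 1) / 2 = k := by omega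
    rw [hdiv] at hz
    exact ⟨z, hmemU (2 * k + 1 + 1) hz⟩
  have hfun : ∀ x y1 y2 : QS S, (x, y1) ∈ Un → (x, y2) ∈ Un → y1 = y2 := by
    intro x y1 y2 h1 h2
    have := (hUpiso (x, y1) h1 (x, y2) h2).1
    rw [dQ_self] at this
    exact eq_of_dQ_eq_zero hSpos this
  have hinj : ∀ x1 x2 y : QS S, (x1, y) ∈ Un → (x2, y) ∈ Un → x1 = x2 := by
    intro x1 x2 y h1 h2
    have := (hUpiso (x1, y) h1 (x2, y) h2).1
    rw [dQ_self] at this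
    exact eq_of_dQ_eq_zero hSpos this.symm
  let g0 : QS S → QS S := fun x => Classical.choose (htotdom x)
  have hg0 : ∀ x, (x, g0 x) ∈ Un := fun x => Classical.choose_spec (htotdom x)
  let g1 : QS S → QS S := fun y => Classical.choose (htotran y)
  have hg1 : ∀ y, (g1 y, y) ∈ Un := fun y => Classical.choose_spec (htotran y)
  refine ⟨⟨g0, g1, fun x => hinj _ _ _ (hg1 (g0 x)) (hg0 x),
    fun y => hfun _ _ _ (hg0 (g1 y)) (hg1 y)⟩, ?_, ?_, ?_⟩
  · intro x y
    exact (hUpiso (x, g0 x) (hg0 x) (y, g0 y) (hg0 y)).1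
  · intro x y
    exact (hUpiso (x, g0 x) (hg0 x) (y, g0 y) (hg0 y)).2
  · intro p hp
    have hpU : p ∈ Un := hmemU 0 hp
    have : ((p.1, p.2) : QS S × QS S) ∈ Un := by
      rw [Prod.mk.eta]; exact hpU
    exact hfun p.1 _ _ (hg0 p.1) this

end QSaux

/-- `(Q_S, <lex)` is ultrahomogeneous: every order-preserving isometry between finite
subsets of `Q_S` extends to a bijective order-preserving self-isometry of
`(Q_S, <lex)`. -/
theorem QS_ultrahomogeneous
    (S : Set ℝ) (hScount : S.Countable) (hSpos : ∀ s ∈ S, 0 < s)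
    (F : Set (QS S)) (hF : F.Finite) (φ : QS S → QS S)
    (hiso : ∀ x ∈ F, ∀ y ∈ F, dQ S (φ x).1 (φ y).1 = dQ S x.1 y.1)
    (hord : ∀ x ∈ F, ∀ y ∈ F, (lexQ S (φ x).1 (φ y).1 ↔ lexQ S x.1 y.1)) :
    ∃ g : QS S ≃ QS S,
      (∀ x y : QS S, dQ S (g x).1 (g y).1 = dQ S x.1 y.1) ∧
      (∀ x y : QS S, lexQ S (g x).1 (g y).1 ↔ lexQ S x.1 y.1) ∧
      ∀ x ∈ F, g x = φ x := by
  have h0 : PIso S ((fun a => (a, φ a)) '' F) := by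
    rintro _ ⟨a, ha, rfl⟩ _ ⟨b, hb, rfl⟩
    exact ⟨hiso a ha b hb, hord a ha b hb⟩
  obtain ⟨g, h1, h2, h3⟩ := QSaux.PIso_extension hSpos hScount _ (hF.image _) h0
  exact ⟨g, h1, h2, fun x hx => h3 (x, φ x) ⟨x, hx, rfl⟩⟩
end

section
/- Let S be a countable set of positive reals having 0 as an accumulation point. Let U_S be the set of functions x : S → ℚ whose support is contained in {s_i : i ∈ ℕ} for some strictly decreasing sequence (s_i) of elements of S converging to 0, with d(x,y) = min{s ∈ S : x(t) = y(t) for all t ∈ S with t > s} for x ≠ y and d(x,x)=0. Then (U_S, d) is a complete ultrametric space in which Q_S is a dense subspace; hence U_S is the completion of the ultrametric space Q_S. -/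
open Classical

/-- Membership in `U_S` : the support of `x : S → ℚ` is contained in the range of some
strictly decreasing sequence of elements of `S` converging to `0`. -/
def USsupp (S : Set ℝ) (x : S → ℚ) : Prop :=
  ∃ f : ℕ → ℝ, StrictAnti f ∧ (∀ i, f i ∈ S) ∧
    Filter.Tendsto f Filter.atTop (nhds 0) ∧
    ∀ s : S, x s ≠ 0 → ∃ i, (s : ℝ) = f i

/-- The space `U_S`, completion of `Q_S`. -/
def US (S : Set ℝ) := {x : S → ℚ // USsupp S x}

/-- The distance on `U_S` : `d x y = min {s ∈ S | x and y agree above s}` for `x ≠ y`,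
and `d x x = 0`. -/
noncomputable def dU (S : Set ℝ) (x y : US S) : ℝ :=
  if x = y then 0
  else sInf {r : ℝ | r ∈ S ∧ ∀ t : S, r < (t : ℝ) → x.1 t = y.1 t}

open Filter Set

lemma range_inter_finite {f : ℕ → ℝ} (hf : Tendsto f atTop (nhds 0)) {δ : ℝ} (hδ : 0 < δ) :
    (Set.range f ∩ Set.Ioi δ).Finite := by
  obtain ⟨N, hN⟩ := Metric.tendsto_atTop.mp hf δ hδ
  apply ((Set.finite_Iio N).image f).subset
  rintro t ⟨⟨n, rfl⟩, ht⟩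
  refine ⟨n, ?_, rfl⟩
  by_contra h
  simp only [Set.mem_Iio, not_lt] at h
  have h2 := hN n h
  rw [Real.dist_eq, sub_zero] at h2
  have h3 : f n < δ := lt_of_abs_lt h2
  exact absurd ht (not_lt.mpr (le_of_lt h3))

lemma exists_greatest_of_locFin {Q : Set ℝ} (hpos : ∀ q ∈ Q, 0 < q)
    (hfin : ∀ δ > 0, (Q ∩ Set.Ioi δ).Finite)
    {T : Set ℝ} (hTQ : T ⊆ Q) (hne : T.Nonempty) : ∃ m, IsGreatest T m := by
  obtain ⟨q, hq⟩ := hne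
  have hq0 : 0 < q := hpos q (hTQ hq)
  have hF : (T ∩ Set.Ici q).Finite := by
    apply (hfin (q/2) (by linarith)).subset
    rintro t ⟨ht, hge⟩
    exact ⟨hTQ ht, lt_of_lt_of_le (by linarith : q/2 < q) hge⟩
  obtain ⟨m, hmF, hmax⟩ := Set.exists_max_image _ id hF ⟨q, hq, le_refl q⟩
  refine ⟨m, hmF.1, fun t ht => ?_⟩
  rcases le_or_gt q t with h | h
  · exact hmax t ⟨ht, h⟩
  · exact le_trans (le_of_lt h) hmF.2

lemma exists_null_seq (S : Set ℝ) (hSpos : ∀ s ∈ S, 0 < s) (hacc : ∀ ε > 0, ∃ s ∈ S, s < ε) :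
    ∃ r : ℕ → ℝ, (∀ n, r n ∈ S) ∧ StrictAnti r ∧ Tendsto r atTop (nhds 0) := by
  have hpos : ∀ (p : {s : ℝ // s ∈ S}) (n : ℕ), 0 < min p.1 (1/((n:ℝ)+1)) :=
    fun p n => lt_min (hSpos _ p.2) (by positivity)
  let g : ℕ → {s : ℝ // s ∈ S} := fun n => Nat.rec
    ⟨(hacc 1 one_pos).choose, (hacc 1 one_pos).choose_spec.1⟩
    (fun n p => ⟨(hacc _ (hpos p n)).choose, (hacc _ (hpos p n)).choose_spec.1⟩) n
  have hstep : ∀ n, (g (n+1)).1 < min (g n).1 (1/((n:ℝ)+1)) := fun n =>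
    (hacc _ (hpos (g n) n)).choose_spec.2
  refine ⟨fun n => (g n).1, fun n => (g n).2,
    strictAnti_nat_of_succ_lt (fun n => lt_of_lt_of_le (hstep n) (min_le_left _ _)), ?_⟩
  rw [← tendsto_add_atTop_iff_nat 1]
  apply squeeze_zero (fun n => le_of_lt (hSpos _ (g (n+1)).2))
    (fun n => le_of_lt (lt_of_lt_of_le (hstep n) (min_le_right _ _)))
    tendsto_one_div_add_atTop_nhds_zero_nat

lemma exists_enum (S : Set ℝ) (hSpos : ∀ s ∈ S, 0 < s) (hacc : ∀ ε > 0, ∃ s ∈ S, s < ε)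
    (P : Set ℝ) (hPS : P ⊆ S) (hPfin : ∀ δ > 0, (P ∩ Set.Ioi δ).Finite) :
    ∃ f : ℕ → ℝ, StrictAnti f ∧ (∀ i, f i ∈ S) ∧ Tendsto f atTop (nhds 0) ∧
      P ⊆ Set.range f := by
  obtain ⟨r, hrS, hranti, hrtend⟩ := exists_null_seq S hSpos hacc
  set Q : Set ℝ := P ∪ Set.range r with hQdef
  have hQS : Q ⊆ S := by
    rintro q (hq | ⟨n, rfl⟩)
    · exact hPS hq
    · exact hrS n
  have hQpos : ∀ q ∈ Q, 0 < q := fun q hq => hSpos q (hQS hq)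
  have hQfin : ∀ δ > 0, (Q ∩ Set.Ioi δ).Finite := by
    intro δ hδ
    have : Q ∩ Set.Ioi δ ⊆ (P ∩ Set.Ioi δ) ∪ (Set.range r ∩ Set.Ioi δ) := by
      rintro q ⟨hq | hq, hδq⟩
      · exact Or.inl ⟨hq, hδq⟩
      · exact Or.inr ⟨hq, hδq⟩
    exact ((hPfin δ hδ).union (range_inter_finite hrtend hδ)).subset this
  have hrsmall : ∀ c : ℝ, 0 < c → ∃ n, r n < c := by
    intro c hc
    obtain ⟨N, hN⟩ := Metric.tendsto_atTop.mp hrtend c hc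
    refine ⟨N, ?_⟩
    have := hN N (le_refl N)
    rw [Real.dist_eq, sub_zero] at this
    exact lt_of_abs_lt this
  have hex : ∀ c : ℝ, c ∈ Q → ∃ m, IsGreatest (Q ∩ Set.Iio c) m := by
    intro c hc
    obtain ⟨n, hn⟩ := hrsmall c (hQpos c hc)
    exact exists_greatest_of_locFin hQpos hQfin Set.inter_subset_left
      ⟨r n, Or.inr ⟨n, rfl⟩, hn⟩
  have hex0 : ∃ m, IsGreatest Q m :=
    exists_greatest_of_locFin hQpos hQfin (subset_refl Q) ⟨r 0, Or.inr ⟨0, rfl⟩⟩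
  let g : ℕ → {c : ℝ // c ∈ Q} := fun n => Nat.rec
    ⟨hex0.choose, hex0.choose_spec.1⟩
    (fun _ p => ⟨(hex p.1 p.2).choose, ((hex p.1 p.2).choose_spec.1).1⟩) n
  have hg0 : IsGreatest Q (g 0).1 := hex0.choose_spec
  have hgs : ∀ n, IsGreatest (Q ∩ Set.Iio (g n).1) (g (n+1)).1 :=
    fun n => (hex (g n).1 (g n).2).choose_spec
  have hanti : StrictAnti (fun n => (g n).1) :=
    strictAnti_nat_of_succ_lt (fun n => ((hgs n).1).2)
  have hmemS : ∀ n, (g n).1 ∈ S := fun n => hQS (g n).2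
  have hinj : Function.Injective (fun n => (g n).1) := hanti.injective
  have htend : Tendsto (fun n => (g n).1) atTop (nhds 0) := by
    rw [Metric.tendsto_atTop]
    intro ε hε
    have hfin2 : {n : ℕ | ε ≤ (g n).1}.Finite := by
      have : {n : ℕ | ε ≤ (g n).1} ⊆ (fun n => (g n).1) ⁻¹' (Q ∩ Set.Ioi (ε/2)) := by
        intro n hn
        exact ⟨(g n).2, lt_of_lt_of_le (by linarith : ε/2 < ε) hn⟩
      exact ((hQfin (ε/2) (by linarith)).preimage (hinj.injOn)).subset this
    obtain ⟨N, hN⟩ := hfin2.bddAbove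
    refine ⟨N+1, fun n hn => ?_⟩
    rw [Real.dist_eq, sub_zero, abs_of_pos (hQpos _ (g n).2)]
    by_contra h
    push_neg at h
    exact absurd (hN h) (by omega)
  refine ⟨fun n => (g n).1, hanti, hmemS, htend, ?_⟩
  intro q hq
  have hqQ : q ∈ Q := Or.inl hq
  have key : ∀ n : ℕ, (∃ i ≤ n, (g i).1 = q) ∨ q < (g n).1 := by
    intro n
    induction n with
    | zero =>
      rcases eq_or_lt_of_le (hg0.2 hqQ) with h | h
      · exact Or.inl ⟨0, le_refl 0, h.symm⟩
      · exact Or.inr h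
    | succ n ih =>
      rcases ih with ⟨i, hi, hiq⟩ | h
      · exact Or.inl ⟨i, by omega, hiq⟩
      · rcases eq_or_lt_of_le ((hgs n).2 ⟨hqQ, h⟩) with h2 | h2
        · exact Or.inl ⟨n+1, le_refl _, h2.symm⟩
        · exact Or.inr h2
  obtain ⟨n, hn⟩ := hrsmall q (hSpos q (hPS hq))
  -- find n with (g n).1 < q
  obtain ⟨N, hN⟩ := Metric.tendsto_atTop.mp htend q (hSpos q (hPS hq))
  have hlt : (g N).1 < q := by
    have := hN N (le_refl N)
    rw [Real.dist_eq, sub_zero] at this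
    exact lt_of_abs_lt this
  rcases key N with ⟨i, _, hiq⟩ | h
  · exact ⟨i, hiq⟩
  · exact absurd h (not_lt.mpr (le_of_lt hlt))

lemma usupp_of_locFin (S : Set ℝ) (hSpos : ∀ s ∈ S, 0 < s) (hacc : ∀ ε > 0, ∃ s ∈ S, s < ε)
    (x : S → ℚ)
    (h : ∀ δ > 0, ((Subtype.val '' {s : S | x s ≠ 0}) ∩ Set.Ioi δ).Finite) :
    USsupp S x := by
  obtain ⟨f, hf1, hf2, hf3, hf4⟩ := exists_enum S hSpos hacc
    (Subtype.val '' {s : S | x s ≠ 0})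
    (by rintro t ⟨s, _, rfl⟩; exact s.2) h
  refine ⟨f, hf1, hf2, hf3, fun s hs => ?_⟩
  obtain ⟨i, hi⟩ := hf4 ⟨s, hs, rfl⟩
  exact ⟨i, hi.symm⟩

/-- the disagreement set, as a set of reals -/
lemma dU_spec (S : Set ℝ) (hSpos : ∀ s ∈ S, 0 < s) (x y : US S) (hxy : x ≠ y) :
    IsGreatest (Subtype.val '' {s : S | x.1 s ≠ y.1 s}) (dU S x y) ∧ dU S x y ∈ S := by
  set D : Set ℝ := Subtype.val '' {s : S | x.1 s ≠ y.1 s} with hD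
  have hDS : D ⊆ S := by rintro t ⟨s, _, rfl⟩; exact s.2
  have hDne : D.Nonempty := by
    have : x.1 ≠ y.1 := fun h => hxy (Subtype.ext h)
    obtain ⟨s, hs⟩ := Function.ne_iff.mp this
    exact ⟨s.1, s, hs, rfl⟩
  have hDfin : ∀ δ > 0, (D ∩ Set.Ioi δ).Finite := by
    intro δ hδ
    obtain ⟨f, _, _, hf3, hf4⟩ := x.2
    obtain ⟨g, _, _, hg3, hg4⟩ := y.2
    apply ((range_inter_finite hf3 hδ).union (range_inter_finite hg3 hδ)).subset
    rintro t ⟨⟨s, hs, rfl⟩, hδt⟩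
    by_cases hx0 : x.1 s = 0
    · have hy0 : y.1 s ≠ 0 := fun h => hs (hx0.trans h.symm)
      obtain ⟨i, hi⟩ := hg4 s hy0
      exact Or.inr ⟨⟨i, hi.symm⟩, hδt⟩
    · obtain ⟨i, hi⟩ := hf4 s hx0
      exact Or.inl ⟨⟨i, hi.symm⟩, hδt⟩
  obtain ⟨T, hT⟩ := exists_greatest_of_locFin (fun q hq => hSpos q (hDS hq)) hDfin
    (subset_refl D) hDne
  obtain ⟨s₀, hs₀, hs₀T⟩ := hT.1
  have hTA : IsLeast {r : ℝ | r ∈ S ∧ ∀ t : S, r < (t : ℝ) → x.1 t = y.1 t} T := by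
    constructor
    · refine ⟨hs₀T ▸ s₀.2, fun t ht => ?_⟩
      by_contra hne
      exact absurd ht (not_lt.mpr (hT.2 ⟨t, hne, rfl⟩))
    · rintro r ⟨hrS, hr⟩
      by_contra hlt
      push_neg at hlt
      exact hs₀ (hr s₀ (hs₀T ▸ hlt))
  have : dU S x y = T := by
    rw [dU, if_neg hxy]
    exact hTA.csInf_eq
  rw [this]
  exact ⟨hT, hs₀T ▸ s₀.2⟩

lemma dU_nonneg (S : Set ℝ) (hSpos : ∀ s ∈ S, 0 < s) (x y : US S) : 0 ≤ dU S x y := by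
  by_cases h : x = y
  · rw [dU, if_pos h]
  · exact le_of_lt (hSpos _ (dU_spec S hSpos x y h).2)

lemma dU_le_of_agree (S : Set ℝ) (hSpos : ∀ s ∈ S, 0 < s) (x y : US S) {r : ℝ}
    (hrS : r ∈ S) (h : ∀ t : S, r < (t : ℝ) → x.1 t = y.1 t) : dU S x y ≤ r := by
  by_cases hxy : x = y
  · rw [dU, if_pos hxy]; exact le_of_lt (hSpos r hrS)
  · obtain ⟨hG, _⟩ := dU_spec S hSpos x y hxy
    obtain ⟨s, hs, hsv⟩ := hG.1
    by_contra hlt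
    push_neg at hlt
    exact hs (h s (by rw [hsv]; exact hlt))

lemma agree_of_dU_lt (S : Set ℝ) (hSpos : ∀ s ∈ S, 0 < s) (x y : US S) (t : S)
    (h : dU S x y < (t : ℝ)) : x.1 t = y.1 t := by
  by_cases hxy : x = y
  · rw [hxy]
  · by_contra hne
    obtain ⟨hG, _⟩ := dU_spec S hSpos x y hxy
    exact absurd h (not_lt.mpr (hG.2 ⟨t, hne, rfl⟩))

/-- `(U_S, d)` is a complete ultrametric space in which the set of finitely supported
elements (i.e. `Q_S`) is a dense subspace (with the same distance as `Q_S`); hence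
`U_S` is the completion of `Q_S`. -/
theorem US_is_completion_of_QS
    (S : Set ℝ) (hScount : S.Countable) (hSpos : ∀ s ∈ S, 0 < s)
    (hacc : ∀ ε > 0, ∃ s ∈ S, s < ε) :
    -- Q_S sits inside U_S : every finitely supported function belongs to U_S
    (∀ x : S → ℚ, {s : S | x s ≠ 0}.Finite → USsupp S x) ∧
    -- d is an ultrametric on U_S with nonzero distances in S
    (∀ x : US S, dU S x x = 0) ∧
    (∀ x y : US S, dU S x y = dU S y x) ∧
    (∀ x y : US S, x ≠ y → dU S x y ∈ S) ∧
    (∀ x y : US S, x ≠ y → 0 < dU S x y) ∧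
    (∀ x y z : US S, dU S x z ≤ max (dU S x y) (dU S y z)) ∧
    -- on Q_S, d coincides with the distance of Q_S, namely max{s ∈ S : x s ≠ y s}
    (∀ x y : US S, {s : S | x.1 s ≠ 0}.Finite → {s : S | y.1 s ≠ 0}.Finite → x ≠ y →
      dU S x y = sSup (Subtype.val '' {s : S | x.1 s ≠ y.1 s})) ∧
    -- Q_S is dense in U_S
    (∀ y : US S, ∀ ε : ℝ, 0 < ε →
      ∃ x : US S, {s : S | x.1 s ≠ 0}.Finite ∧ dU S x y < ε) ∧
    -- U_S is complete: every Cauchy sequence converges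
    (∀ u : ℕ → US S,
      (∀ ε : ℝ, 0 < ε → ∃ N : ℕ, ∀ m ≥ N, ∀ n ≥ N, dU S (u m) (u n) < ε) →
      ∃ x : US S, ∀ ε : ℝ, 0 < ε → ∃ N : ℕ, ∀ n ≥ N, dU S (u n) x < ε) := by
  have hfinsupp : ∀ x : S → ℚ, {s : S | x s ≠ 0}.Finite → USsupp S x := by
    intro x hx
    exact usupp_of_locFin S hSpos hacc x
      (fun δ hδ => ((hx.image Subtype.val).inter_of_left _))
  refine ⟨hfinsupp, ?_, ?_, ?_, ?_, ?_, ?_, ?_, ?_⟩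
  · -- dU x x = 0
    intro x; rw [dU, if_pos rfl]
  · -- symmetry
    intro x y
    by_cases h : x = y
    · rw [dU, dU, if_pos h, if_pos h.symm]
    · rw [dU, dU, if_neg h, if_neg (Ne.symm h)]
      congr 1
      ext r
      exact ⟨fun ⟨h1, h2⟩ => ⟨h1, fun t ht => (h2 t ht).symm⟩,
        fun ⟨h1, h2⟩ => ⟨h1, fun t ht => (h2 t ht).symm⟩⟩
  · -- dU ∈ S
    intro x y hxy; exact (dU_spec S hSpos x y hxy).2
  · -- 0 < dU
    intro x y hxy; exact hSpos _ (dU_spec S hSpos x y hxy).2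
  · -- ultrametric
    intro x y z
    by_cases hxz : x = z
    · rw [dU, if_pos hxz]
      exact le_max_of_le_left (dU_nonneg S hSpos x y)
    · obtain ⟨hG, _⟩ := dU_spec S hSpos x z hxz
      obtain ⟨s, hs, hsv⟩ := hG.1
      by_cases hxy : x.1 s = y.1 s
      · -- then y s ≠ z s
        have hyz : y.1 s ≠ z.1 s := fun h => hs (hxy.trans h)
        have hyzne : y ≠ z := fun h => hyz (by rw [h])
        have := (dU_spec S hSpos y z hyzne).1.2 ⟨s, hyz, rfl⟩
        rw [hsv] at this
        exact le_max_of_le_right this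
      · have hxyne : x ≠ y := fun h => hxy (by rw [h])
        have := (dU_spec S hSpos x y hxyne).1.2 ⟨s, hxy, rfl⟩
        rw [hsv] at this
        exact le_max_of_le_left this
  · -- dU = sSup of disagreement set
    intro x y _ _ hxy
    exact ((dU_spec S hSpos x y hxy).1.csSup_eq).symm
  · -- density
    intro y ε hε
    obtain ⟨r, hrS, hrε⟩ := hacc ε hε
    set x0 : S → ℚ := fun s => if r < (s : ℝ) then y.1 s else 0 with hx0
    have hsupp : {s : S | x0 s ≠ 0}.Finite := by
      obtain ⟨f, _, _, hf3, hf4⟩ := y.2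
      apply Set.Finite.of_finite_image (f := Subtype.val) _ (Set.injOn_of_injective Subtype.val_injective)
      apply (range_inter_finite hf3 (hSpos r hrS)).subset
      rintro t ⟨s, hs, rfl⟩
      have hrs : r < (s : ℝ) := by
        by_contra hc
        exact hs (if_neg hc)
      have hys : y.1 s ≠ 0 := by
        intro h
        apply hs
        show (if r < (s : ℝ) then y.1 s else 0) = 0
        rw [if_pos hrs, h]
      obtain ⟨i, hi⟩ := hf4 s hys
      exact ⟨⟨i, hi.symm⟩, hrs⟩
    refine ⟨⟨x0, hfinsupp x0 hsupp⟩, hsupp, ?_⟩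
    apply lt_of_le_of_lt _ hrε
    apply dU_le_of_agree S hSpos _ y hrS
    intro t ht
    simp only [hx0]
    rw [if_pos ht]
  · -- completeness
    intro u hu
    choose N hN using fun (s : S) => hu s.1 (hSpos s.1 s.2)
    set x0 : S → ℚ := fun s => (u (N s)).1 s with hx0def
    have key : ∀ s : S, ∀ n, N s ≤ n → (u n).1 s = x0 s := by
      intro s n hn
      exact (agree_of_dU_lt S hSpos (u (N s)) (u n) s (hN s (N s) (le_refl _) n hn)).symm
    have hlocfin : ∀ δ > 0, ((Subtype.val '' {s : S | x0 s ≠ 0}) ∩ Set.Ioi δ).Finite := by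
      intro δ hδ
      obtain ⟨ρ, hρS, hρδ⟩ := hacc δ hδ
      set M := N ⟨ρ, hρS⟩ with hM
      have hagree : ∀ s : S, δ < (s : ℝ) → x0 s = (u M).1 s := by
        intro s hδs
        set m := max (N s) M with hm
        have h1 : (u m).1 s = x0 s := key s m (le_max_left _ _)
        have h2 : dU S (u M) (u m) < (s : ℝ) :=
          lt_trans (lt_trans (hN ⟨ρ, hρS⟩ M (le_refl _) m (le_max_right _ _)) hρδ) hδs
        rw [← h1]
        exact (agree_of_dU_lt S hSpos (u M) (u m) s h2).symm
      obtain ⟨f, _, _, hf3, hf4⟩ := (u M).2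
      apply (range_inter_finite hf3 hδ).subset
      rintro t ⟨⟨s, hs, rfl⟩, hδt⟩
      have : (u M).1 s ≠ 0 := by rw [← hagree s hδt]; exact hs
      obtain ⟨i, hi⟩ := hf4 s this
      exact ⟨⟨i, hi.symm⟩, hδt⟩
    refine ⟨⟨x0, usupp_of_locFin S hSpos hacc x0 hlocfin⟩, ?_⟩
    intro ε hε
    obtain ⟨ρ, hρS, hρε⟩ := hacc ε hε
    refine ⟨N ⟨ρ, hρS⟩, fun n hn => ?_⟩
    apply lt_of_le_of_lt _ hρε
    apply dU_le_of_agree S hSpos _ _ hρS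
    intro t ht
    set m := max (N t) (N ⟨ρ, hρS⟩) with hm
    have h1 : (u m).1 t = x0 t := key t m (le_max_left _ _)
    have h2 : dU S (u n) (u m) < (t : ℝ) :=
      lt_trans (hN ⟨ρ, hρS⟩ n hn m (le_max_right _ _)) ht
    show (u n).1 t = x0 t
    rw [← h1]
    exact agree_of_dU_lt S hSpos (u n) (u m) t h2
end

section
/- Let S be a countable set of positive reals having 0 as an accumulation point. Every bijective order-preserving self-isometry of (Q_S, <_lex) extends uniquely to a bijective order-preserving self-isometry of (U_S, <_lex), and the extension map g ↦ ĝ is an injective continuous group homomorphism from Aut(Q_S, <_lex) to Aut(U_S, <_lex) with dense range, where Aut(Q_S, <_lex) carries the topology of pointwise convergence on the discrete space Q_S and Aut(U_S, <_lex) carries the topology of pointwise convergence on the metric space U_S. -/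
open Classical

/-- The lexicographical ordering on `U_S` : `x <lex y` iff `x s < y s` where `s` is
the largest element of `S` at which `x` and `y` differ (i.e. `s = d x y`). -/
def lexU (S : Set ℝ) (x y : US S) : Prop :=
  ∃ s : S, x.1 s < y.1 s ∧ ∀ t : S, (s : ℝ) < (t : ℝ) → x.1 t = y.1 t

/-- `Q_S`, viewed as the subspace of `U_S` of finitely supported elements. -/
def Qsub (S : Set ℝ) := {x : US S // {s : S | x.1 s ≠ 0}.Finite}

/-- The distance of `Q_S` : `d x y = max {s ∈ S | x s ≠ y s}`. -/
noncomputable def dQs (S : Set ℝ) (x y : Qsub S) : ℝ :=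
  sSup (Subtype.val '' {s : S | x.1.1 s ≠ y.1.1 s})

/-- The lexicographical ordering on `Q_S`. -/
def lexQs (S : Set ℝ) (x y : Qsub S) : Prop := lexU S x.1 y.1

/-- The group `Aut(Q_S, <lex)` of bijective order-preserving self-isometries of
`(Q_S, <lex)`. -/
def AutQ (S : Set ℝ) :=
  {g : Qsub S ≃ Qsub S //
    (∀ x y, dQs S (g x) (g y) = dQs S x y) ∧ (∀ x y, lexQs S (g x) (g y) ↔ lexQs S x y)}

/-- The group `Aut(U_S, <lex)` of bijective order-preserving self-isometries of
`(U_S, <lex)`. -/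
def AutU (S : Set ℝ) :=
  {g : US S ≃ US S //
    (∀ x y, dU S (g x) (g y) = dU S x y) ∧ (∀ x y, lexU S (g x) (g y) ↔ lexU S x y)}

instance (S : Set ℝ) : Group (AutQ S) where
  mul g h := ⟨h.1.trans g.1,
    fun x y => by simp only [Equiv.trans_apply]; rw [g.2.1, h.2.1],
    fun x y => by simp only [Equiv.trans_apply]; exact (g.2.2 _ _).trans (h.2.2 _ _)⟩
  one := ⟨Equiv.refl _, fun x y => rfl, fun x y => Iff.rfl⟩
  inv g := ⟨g.1.symm,
    fun x y => by have := g.2.1 (g.1.symm x) (g.1.symm y); simpa using this.symm,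
    fun x y => by have := g.2.2 (g.1.symm x) (g.1.symm y); simpa using this.symm⟩
  mul_assoc a b c := Subtype.ext (Equiv.ext fun x => rfl)
  one_mul a := Subtype.ext (Equiv.ext fun x => rfl)
  mul_one a := Subtype.ext (Equiv.ext fun x => rfl)
  inv_mul_cancel g := Subtype.ext (Equiv.ext fun x => g.1.symm_apply_apply x)

instance (S : Set ℝ) : Group (AutU S) where
  mul g h := ⟨h.1.trans g.1,
    fun x y => by simp only [Equiv.trans_apply]; rw [g.2.1, h.2.1],
    fun x y => by simp only [Equiv.trans_apply]; exact (g.2.2 _ _).trans (h.2.2 _ _)⟩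
  one := ⟨Equiv.refl _, fun x y => rfl, fun x y => Iff.rfl⟩
  inv g := ⟨g.1.symm,
    fun x y => by have := g.2.1 (g.1.symm x) (g.1.symm y); simpa using this.symm,
    fun x y => by have := g.2.2 (g.1.symm x) (g.1.symm y); simpa using this.symm⟩
  mul_assoc a b c := Subtype.ext (Equiv.ext fun x => rfl)
  one_mul a := Subtype.ext (Equiv.ext fun x => rfl)
  mul_one a := Subtype.ext (Equiv.ext fun x => rfl)
  inv_mul_cancel g := Subtype.ext (Equiv.ext fun x => g.1.symm_apply_apply x)

/-- `Q_S` carries the discrete topology. -/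
instance (S : Set ℝ) : TopologicalSpace (Qsub S) := ⊥

/-- `Aut(Q_S, <lex)` carries the topology of pointwise convergence on the discrete
space `Q_S` (for the group and its inverses). -/
instance (S : Set ℝ) : TopologicalSpace (AutQ S) :=
  TopologicalSpace.induced
    (fun g : AutQ S => ((g.1 : Qsub S → Qsub S), (g.1.symm : Qsub S → Qsub S)))
    inferInstance

/-- `U_S` carries the metric topology of `dU`. -/
instance (S : Set ℝ) : TopologicalSpace (US S) :=
  TopologicalSpace.generateFrom
    {B : Set (US S) | ∃ x ε, 0 < ε ∧ B = {y | dU S x y < ε}}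

/-- `Aut(U_S, <lex)` carries the topology of pointwise convergence on the metric
space `U_S` (for the group and its inverses). -/
instance (S : Set ℝ) : TopologicalSpace (AutU S) :=
  TopologicalSpace.induced
    (fun g : AutU S => ((g.1 : US S → US S), (g.1.symm : US S → US S)))
    inferInstance

namespace ExtAux

variable {S : Set ℝ}

/-- Agreement above a threshold. -/
def agr (S : Set ℝ) (r : ℝ) (x y : US S) : Prop := ∀ t : S, r < (t : ℝ) → x.1 t = y.1 t

lemma agr_symm {r : ℝ} {x y : US S} (h : agr S r x y) : agr S r y x :=
  fun t ht => (h t ht).symm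

lemma agr_trans {r : ℝ} {x y z : US S} (h : agr S r x y) (h' : agr S r y z) :
    agr S r x z := fun t ht => (h t ht).trans (h' t ht)

lemma agr_mono {r r' : ℝ} {x y : US S} (hrr : r ≤ r') (h : agr S r x y) :
    agr S r' x y := fun t ht => h t (lt_of_le_of_lt hrr ht)

/-- The support of an element of `U_S` above a positive threshold is finite. -/
lemma sparse (x : US S) {ε : ℝ} (hε : 0 < ε) :
    {s : S | x.1 s ≠ 0 ∧ ε < (s : ℝ)}.Finite := by
  obtain ⟨f, hanti, hfS, hf0, hsupp⟩ := x.2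
  have hfin : {i : ℕ | ε < f i}.Finite := by
    have hev : ∀ᶠ i in Filter.atTop, f i < ε := hf0.eventually_lt_const hε
    rw [Filter.eventually_atTop] at hev
    obtain ⟨N, hN⟩ := hev
    exact (Set.finite_Iio N).subset (fun i hi => by
      by_contra hlt
      exact absurd (hN i (not_lt.1 hlt)) (not_lt.2 (le_of_lt hi)))
  have : {s : S | x.1 s ≠ 0 ∧ ε < (s : ℝ)} ⊆ Subtype.val ⁻¹' (f '' {i : ℕ | ε < f i}) := by
    intro s hs
    obtain ⟨i, hi⟩ := hsupp s hs.1
    exact ⟨i, show ε < f i by rw [← hi]; exact hs.2, hi.symm⟩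
  exact ((hfin.image f).preimage (Subtype.val_injective.injOn)).subset this

lemma US_ext {x y : US S} (h : ∀ s : S, x.1 s = y.1 s) : x = y :=
  Subtype.ext (funext h)

/-- Two distinct elements of `U_S` have a largest point of disagreement. -/
lemma exists_max_disagree {x y : US S} (hpos : ∀ s ∈ S, 0 < s) (h : x ≠ y) :
    ∃ s₀ : S, x.1 s₀ ≠ y.1 s₀ ∧ ∀ t : S, x.1 t ≠ y.1 t → (t : ℝ) ≤ (s₀ : ℝ) := by
  have hne : ∃ s : S, x.1 s ≠ y.1 s := by
    by_contra hc
    push_neg at hc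
    exact h (US_ext hc)
  obtain ⟨d, hd⟩ := hne
  have hdpos : 0 < (d : ℝ) := hpos d d.2
  set D' : Set S := {s : S | x.1 s ≠ y.1 s ∧ (d : ℝ) / 2 < (s : ℝ)} with hD'
  have hfin : D'.Finite := by
    apply ((sparse x (ε := (d:ℝ)/2) (by linarith)).union
      (sparse y (ε := (d:ℝ)/2) (by linarith))).subset
    intro s hs
    rcases hs with ⟨hne, hgt⟩
    by_cases hx : x.1 s = 0
    · exact Or.inr ⟨fun hy0 => hne (by rw [hx, hy0]), hgt⟩
    · exact Or.inl ⟨hx, hgt⟩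
  have hdD' : d ∈ D' := ⟨hd, by linarith⟩
  obtain ⟨s₀, hs₀, hmax⟩ := Set.Finite.exists_maximalFor (fun s : S => (s : ℝ)) D' hfin ⟨d, hdD'⟩
  refine ⟨s₀, hs₀.1, ?_⟩
  intro t ht
  by_cases hgt : (d : ℝ) / 2 < (t : ℝ)
  · have htD' : t ∈ D' := ⟨ht, hgt⟩
    by_contra hlt
    push_neg at hlt
    exact absurd (hmax htD' (le_of_lt hlt)) (not_le.mpr hlt)
  · push_neg at hgt
    have hds : (d : ℝ) ≤ (s₀ : ℝ) := by
      rcases le_or_gt (d : ℝ) (s₀ : ℝ) with h' | h'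
      · exact h'
      · exact hmax hdD' (le_of_lt h')
    linarith

/-- `dU` computed from a witness to maximal disagreement. -/
lemma dU_eq (hpos : ∀ s ∈ S, 0 < s) {x y : US S} (s₀ : S)
    (h1 : x.1 s₀ ≠ y.1 s₀) (h2 : agr S (s₀ : ℝ) x y) : dU S x y = (s₀ : ℝ) := by
  have hxy : x ≠ y := fun h => h1 (by rw [h])
  rw [dU, if_neg hxy]
  have hmem : (s₀ : ℝ) ∈ {r : ℝ | r ∈ S ∧ ∀ t : S, r < (t : ℝ) → x.1 t = y.1 t} :=
    ⟨s₀.2, h2⟩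
  have hlb : ∀ r ∈ {r : ℝ | r ∈ S ∧ ∀ t : S, r < (t : ℝ) → x.1 t = y.1 t}, (s₀ : ℝ) ≤ r := by
    intro r hr
    by_contra hlt
    push_neg at hlt
    exact h1 (hr.2 s₀ hlt)
  exact le_antisymm (csInf_le ⟨(s₀ : ℝ), hlb⟩ hmem) (le_csInf ⟨_, hmem⟩ hlb)

lemma dU_self (x : US S) : dU S x x = 0 := by rw [dU, if_pos rfl]

lemma dU_le_iff (hpos : ∀ s ∈ S, 0 < s) {x y : US S} {r : ℝ} (hr : 0 < r) :
    dU S x y ≤ r ↔ agr S r x y := by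
  by_cases hxy : x = y
  · subst hxy
    simp [dU_self, le_of_lt hr, agr]
  · obtain ⟨s₀, h1, h2⟩ := exists_max_disagree hpos hxy
    have hagr : agr S (s₀ : ℝ) x y := by
      intro t ht
      by_contra hne
      exact absurd (h2 t hne) (not_le.2 ht)
    rw [dU_eq hpos s₀ h1 hagr]
    constructor
    · intro hle t ht
      exact hagr t (lt_of_le_of_lt hle ht)
    · intro h
      by_contra hlt
      push_neg at hlt
      exact h1 (h s₀ hlt)

lemma dU_pos (hpos : ∀ s ∈ S, 0 < s) {x y : US S} (hxy : x ≠ y) : 0 < dU S x y := by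
  obtain ⟨s₀, h1, h2⟩ := exists_max_disagree hpos hxy
  have hagr : agr S (s₀ : ℝ) x y := fun t ht => by
    by_contra hne; exact absurd (h2 t hne) (not_le.2 ht)
  rw [dU_eq hpos s₀ h1 hagr]
  exact hpos s₀ s₀.2

lemma dU_nonneg (hpos : ∀ s ∈ S, 0 < s) (x y : US S) : 0 ≤ dU S x y := by
  by_cases hxy : x = y
  · subst hxy; rw [dU_self]
  · exact le_of_lt (dU_pos hpos hxy)

lemma agr_of_dU_le (hpos : ∀ s ∈ S, 0 < s) {x y : US S} {r : ℝ} (hr : 0 < r)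
    (h : dU S x y ≤ r) : agr S r x y := (dU_le_iff hpos hr).1 h

lemma dU_ultra (hpos : ∀ s ∈ S, 0 < s) (x y z : US S) :
    dU S x z ≤ max (dU S x y) (dU S y z) := by
  by_cases hxz : x = z
  · subst hxz
    rw [dU_self]
    exact le_max_of_le_left (dU_nonneg hpos x y)
  · have hm : 0 < max (dU S x y) (dU S y z) := by
      by_cases hxy : x = y
      · subst hxy; exact lt_max_of_lt_right (dU_pos hpos hxz)
      · exact lt_max_of_lt_left (dU_pos hpos hxy)
    exact (dU_le_iff hpos hm).2
      (agr_trans (agr_of_dU_le hpos hm (le_max_left _ _))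
        (agr_of_dU_le hpos hm (le_max_right _ _)))

end ExtAux
namespace ExtAux

variable {S : Set ℝ}

lemma Qsub_ext {x y : Qsub S} (h : ∀ s : S, x.1.1 s = y.1.1 s) : x = y :=
  Subtype.ext (US_ext h)

/-- The distance on `Q_S` agrees with the distance on `U_S`. -/
lemma dQs_eq_dU (hpos : ∀ s ∈ S, 0 < s) (x y : Qsub S) :
    dQs S x y = dU S x.1 y.1 := by
  by_cases hxy : x.1 = y.1
  · have hD : {s : S | x.1.1 s ≠ y.1.1 s} = ∅ := by
      ext s; simp [hxy]
    rw [dQs, hD, dU, if_pos hxy]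
    simp [Real.sSup_empty]
  · obtain ⟨s₀, h1, h2⟩ := exists_max_disagree hpos hxy
    have hagr : agr S (s₀ : ℝ) x.1 y.1 := fun t ht => by
      by_contra hne; exact absurd (h2 t hne) (not_le.2 ht)
    rw [dU_eq hpos s₀ h1 hagr, dQs]
    have hmem : (s₀ : ℝ) ∈ Subtype.val '' {s : S | x.1.1 s ≠ y.1.1 s} := ⟨s₀, h1, rfl⟩
    have hub : ∀ r ∈ Subtype.val '' {s : S | x.1.1 s ≠ y.1.1 s}, r ≤ (s₀ : ℝ) := by
      rintro r ⟨t, ht, rfl⟩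
      exact h2 t ht
    exact le_antisymm (csSup_le ⟨_, hmem⟩ hub) (le_csSup ⟨_, hub⟩ hmem)

/-- `lexU` via the maximal point of disagreement. -/
lemma lexU_iff (x y : US S) (s₀ : S) (h1 : x.1 s₀ ≠ y.1 s₀)
    (h2 : agr S (s₀ : ℝ) x y) : lexU S x y ↔ x.1 s₀ < y.1 s₀ := by
  constructor
  · rintro ⟨s, hlt, hag⟩
    rcases lt_trichotomy (s : ℝ) (s₀ : ℝ) with h | h | h
    · exact absurd (hag s₀ h) h1
    · have : s = s₀ := Subtype.ext h
      rwa [this] at hlt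
    · exact absurd (h2 s h) (ne_of_lt hlt)
  · intro hlt
    exact ⟨s₀, hlt, h2⟩

lemma lexU_irrefl_of_eq {x y : US S} (h : x = y) : ¬ lexU S x y := by
  subst h
  rintro ⟨s, hlt, -⟩
  exact lt_irrefl _ hlt

/-- Truncation of an element of `U_S` above a threshold. -/
noncomputable def truncF (r : ℝ) (x : US S) : US S :=
  ⟨fun s => if r < (s : ℝ) then x.1 s else 0, by
    obtain ⟨f, h1, h2, h3, h4⟩ := x.2
    refine ⟨f, h1, h2, h3, fun s hs => ?_⟩
    apply h4
    intro h0
    apply hs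
    simp [h0]⟩

lemma truncF_pos {r : ℝ} {x : US S} {s : S} (h : r < (s : ℝ)) :
    (truncF r x).1 s = x.1 s := if_pos h

lemma truncF_agr (r : ℝ) (x : US S) : agr S r (truncF r x) x :=
  fun _ ht => truncF_pos ht

/-- Truncation as an element of `Q_S`. -/
noncomputable def truncQ {r : ℝ} (hr : 0 < r) (x : US S) : Qsub S :=
  ⟨truncF r x, by
    apply (sparse x hr).subset
    intro s hs
    simp only [Set.mem_setOf_eq, truncF] at hs ⊢
    by_cases h : r < (s : ℝ)
    · rw [if_pos h] at hs; exact ⟨hs, h⟩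
    · rw [if_neg h] at hs; exact absurd rfl hs⟩

lemma truncQ_val {r : ℝ} (hr : 0 < r) (x : US S) : (truncQ hr x).1 = truncF r x := rfl

/-- A strictly decreasing sequence in `S` converging to `0`. -/
lemma exists_cseq (hpos : ∀ s ∈ S, 0 < s) (hacc : ∀ ε > 0, ∃ s ∈ S, s < ε) :
    ∃ c : ℕ → ℝ, (∀ n, c n ∈ S) ∧ StrictAnti c ∧ (∀ n, 0 < c n) ∧
      (∀ n, c n < 1 / (n + 1)) := by
  have step : ∀ (n : ℕ) (p : ℝ), 0 < p → ∃ q : ℝ, q ∈ S ∧ q < min p (1 / (n + 2)) := by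
    intro n p hp
    have hpos' : (0:ℝ) < min p (1 / (n + 2)) := by
      apply lt_min hp
      positivity
    obtain ⟨q, hqS, hq⟩ := hacc _ hpos'
    exact ⟨q, hqS, hq⟩
  obtain ⟨c0, hc0S, hc0⟩ := hacc 1 one_pos
  have hc0pos : 0 < c0 := hpos c0 hc0S
  let c : ℕ → {x : ℝ // x ∈ S ∧ 0 < x} := fun n =>
    Nat.rec ⟨c0, hc0S, hc0pos⟩
      (fun n p => ⟨Classical.choose (step n p.1 p.2.2),
        (Classical.choose_spec (step n p.1 p.2.2)).1,
        hpos _ (Classical.choose_spec (step n p.1 p.2.2)).1⟩) n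
  have hstep : ∀ n, (c (n + 1)).1 < min (c n).1 (1 / (n + 2)) := fun n =>
    (Classical.choose_spec (step n (c n).1 (c n).2.2)).2
  refine ⟨fun n => (c n).1, fun n => (c n).2.1, ?_, fun n => (c n).2.2, ?_⟩
  · apply strictAnti_nat_of_succ_lt
    intro n
    exact lt_of_lt_of_le (hstep n) (min_le_left _ _)
  · intro n
    cases n with
    | zero => simpa [c] using hc0
    | succ m =>
        have := lt_of_lt_of_le (hstep m) (min_le_right _ _)
        have h2 : (1 : ℝ) / (m + 2) = 1 / ((m + 1 : ℕ) + 1) := by push_cast; ring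
        rwa [h2] at this

/-- Any function with sparse support belongs to `U_S`. -/
lemma mkUSsupp (hpos : ∀ s ∈ S, 0 < s) (hacc : ∀ ε > 0, ∃ s ∈ S, s < ε)
    (x : S → ℚ) (hx : ∀ ε : ℝ, 0 < ε → {s : S | x s ≠ 0 ∧ ε < (s : ℝ)}.Finite) :
    USsupp S x := by
  obtain ⟨c, hcS, hcanti, hcpos, hcsmall⟩ := exists_cseq hpos hacc
  set B : Set ℝ := (Subtype.val '' {s : S | x s ≠ 0}) ∪ Set.range c with hB
  have hBS : B ⊆ S := by
    rintro b (⟨s, hs, rfl⟩ | ⟨n, rfl⟩)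
    · exact s.2
    · exact hcS n
  have hBpos : ∀ b ∈ B, 0 < b := fun b hb => hpos b (hBS hb)
  have hBsparse : ∀ ε : ℝ, 0 < ε → (B ∩ Set.Ioi ε).Finite := by
    intro ε hε
    rw [hB, Set.union_inter_distrib_right]
    apply Set.Finite.union
    · apply Set.Finite.subset ((hx ε hε).image Subtype.val)
      rintro b ⟨⟨s, hs, rfl⟩, hb⟩
      exact ⟨s, ⟨hs, hb⟩, rfl⟩
    · have hfin : {n : ℕ | ε < c n}.Finite := by
        have : ∀ᶠ n in Filter.atTop, c n < ε := by
          have hc0 : Filter.Tendsto c Filter.atTop (nhds 0) := by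
            have h1 : Filter.Tendsto (fun n : ℕ => 1 / ((n : ℝ) + 1)) Filter.atTop (nhds 0) :=
              tendsto_one_div_add_atTop_nhds_zero_nat
            refine tendsto_of_tendsto_of_tendsto_of_le_of_le tendsto_const_nhds h1
              (fun n => le_of_lt (hcpos n)) (fun n => le_of_lt (hcsmall n))
          exact hc0.eventually_lt_const hε
        rw [Filter.eventually_atTop] at this
        obtain ⟨N, hN⟩ := this
        exact (Set.finite_Iio N).subset fun n hn => by
          by_contra hc
          exact absurd (hN n (not_lt.1 hc)) (not_lt.2 (le_of_lt hn))
      apply Set.Finite.subset (hfin.image c)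
      rintro b ⟨⟨n, rfl⟩, hb⟩
      exact ⟨n, hb, rfl⟩
  have hBbelow : ∀ ε : ℝ, 0 < ε → ∃ b ∈ B, b < ε := by
    intro ε hε
    obtain ⟨N, hN⟩ := exists_nat_gt (1 / ε)
    refine ⟨c N, Or.inr ⟨N, rfl⟩, ?_⟩
    have h1 : c N < 1 / (N + 1) := hcsmall N
    have h2 : (1 : ℝ) / (N + 1) < ε := by
      rw [div_lt_iff₀ (by positivity)]
      rw [div_lt_iff₀ hε] at hN
      nlinarith
    linarith
  -- greatest element of B strictly below any positive bound
  have hnext : ∀ b : ℝ, 0 < b → ∃ m ∈ B, m < b ∧ ∀ a ∈ B, a < b → a ≤ m := by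
    intro b hb
    obtain ⟨e, heB, heb⟩ := hBbelow b hb
    have hepos : 0 < e := hBpos e heB
    have hGfin : (B ∩ Set.Ico e b).Finite := by
      apply (hBsparse (e / 2) (by linarith)).subset
      rintro a ⟨haB, hae, -⟩
      exact ⟨haB, by simp only [Set.mem_Ioi]; linarith⟩
    obtain ⟨m, hm, hmax⟩ := Set.Finite.exists_maximalFor id _ hGfin ⟨e, heB, le_refl e, heb⟩
    refine ⟨m, hm.1, hm.2.2, ?_⟩
    intro a haB hab
    by_cases hae : e ≤ a
    · rcases le_or_gt a m with h | h
      · exact h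
      · exact hmax ⟨haB, hae, hab⟩ (le_of_lt h)
    · push_neg at hae
      exact le_trans (le_of_lt hae) hm.2.1
  -- an upper bound for B
  obtain ⟨M, hM⟩ : ∃ M : ℝ, 0 < M ∧ ∀ b ∈ B, b < M := by
    have hfin : (B ∩ Set.Ioi 1).Finite := hBsparse 1 one_pos
    obtain ⟨M₀, hM₀⟩ := hfin.bddAbove
    refine ⟨max 2 (M₀ + 1), lt_max_of_lt_left (by norm_num), ?_⟩
    intro b hb
    rcases le_or_gt b 1 with h | h
    · exact lt_of_le_of_lt h (lt_of_lt_of_le one_lt_two (le_max_left _ _))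
    · have := hM₀ ⟨hb, h⟩
      exact lt_of_le_of_lt this (lt_of_lt_of_le (lt_add_one M₀) (le_max_right _ _))
  -- the decreasing enumeration
  let f : ℕ → {m : ℝ // m ∈ B} := fun n =>
    Nat.rec ⟨Classical.choose (hnext M hM.1), (Classical.choose_spec (hnext M hM.1)).1⟩
      (fun _ p => ⟨Classical.choose (hnext p.1 (hBpos p.1 p.2)),
        (Classical.choose_spec (hnext p.1 (hBpos p.1 p.2))).1⟩) n
  have hf0 : (f 0).1 < M ∧ ∀ a ∈ B, a < M → a ≤ (f 0).1 :=
    (Classical.choose_spec (hnext M hM.1)).2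
  have hfs : ∀ n, (f (n+1)).1 < (f n).1 ∧ ∀ a ∈ B, a < (f n).1 → a ≤ (f (n+1)).1 := fun n =>
    (Classical.choose_spec (hnext (f n).1 (hBpos _ (f n).2))).2
  have hanti : StrictAnti (fun n => (f n).1) :=
    strictAnti_nat_of_succ_lt fun n => (hfs n).1
  have hcover : ∀ a ∈ B, ∃ i, a = (f i).1 := by
    intro a ha
    by_contra hc
    push_neg at hc
    have hlt : ∀ n, a < (f n).1 := by
      intro n
      induction n with
      | zero => exact lt_of_le_of_ne (hf0.2 a ha (hM.2 a ha)) (hc 0)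
      | succ m ih => exact lt_of_le_of_ne ((hfs m).2 a ha ih) (hc (m+1))
    have hapos : 0 < a := hBpos a ha
    have : Set.range (fun n => (f n).1) ⊆ B ∩ Set.Ioi (a / 2) := by
      rintro b ⟨n, rfl⟩
      exact ⟨(f n).2, by simp only [Set.mem_Ioi]; have := hlt n; linarith⟩
    exact Set.infinite_range_of_injective hanti.injective
      (((hBsparse (a/2) (by linarith)).subset this))
  have hto0 : Filter.Tendsto (fun n => (f n).1) Filter.atTop (nhds 0) := by
    rw [Metric.tendsto_atTop]
    intro ε hε
    have hex : ∃ N, (f N).1 < ε := by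
      by_contra hc
      push_neg at hc
      have : Set.range (fun n => (f n).1) ⊆ B ∩ Set.Ioi (ε / 2) := by
        rintro b ⟨n, rfl⟩
        exact ⟨(f n).2, by simp only [Set.mem_Ioi]; have := hc n; linarith⟩
      exact Set.infinite_range_of_injective hanti.injective
        ((hBsparse (ε/2) (by linarith)).subset this)
    obtain ⟨N, hN⟩ := hex
    refine ⟨N, fun n hn => ?_⟩
    have h1 : (f n).1 ≤ (f N).1 := hanti.antitone hn
    have h2 : 0 < (f n).1 := hBpos _ (f n).2
    rw [Real.dist_eq, abs_sub_comm, abs_of_nonpos (by linarith)]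
    simp only [neg_sub, sub_zero] at *
    linarith
  refine ⟨fun n => (f n).1, hanti, fun n => hBS (f n).2, hto0, ?_⟩
  intro s hs
  exact hcover (s : ℝ) (Or.inl ⟨s, hs, rfl⟩)

end ExtAux
namespace ExtAux

variable {S : Set ℝ}

/-- Underlying-function agreement transported through an automorphism of `Q_S`. -/
lemma g_agr (hpos : ∀ s ∈ S, 0 < s) (g : AutQ S) {r : ℝ} (hr : 0 < r)
    {x y : Qsub S} (h : agr S r x.1 y.1) : agr S r (g.1 x).1 (g.1 y).1 := by
  have h1 : dU S x.1 y.1 ≤ r := (dU_le_iff hpos hr).2 h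
  have h2 : dU S (g.1 x).1 (g.1 y).1 ≤ r := by
    rw [← dQs_eq_dU hpos, g.2.1, dQs_eq_dU hpos]
    exact h1
  exact (dU_le_iff hpos hr).1 h2

/-- Independence of the truncation threshold. -/
lemma indep (hpos : ∀ s ∈ S, 0 < s) (g : AutQ S) (x : US S) {r₁ r₂ : ℝ}
    (h1 : 0 < r₁) (h2 : 0 < r₂) (h12 : r₁ ≤ r₂) (t : S) (ht : r₂ < (t : ℝ)) :
    (g.1 (truncQ h1 x)).1.1 t = (g.1 (truncQ h2 x)).1.1 t := by
  have hagr : agr S r₂ (truncQ h1 x).1 (truncQ h2 x).1 := by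
    intro u hu
    show (truncF r₁ x).1 u = (truncF r₂ x).1 u
    rw [truncF_pos (lt_of_le_of_lt h12 hu), truncF_pos hu]
  exact g_agr hpos g h2 hagr t ht

/-- The coordinates of the extension of `g` to `U_S`. -/
noncomputable def gextCoord (hpos : ∀ s ∈ S, 0 < s) (g : AutQ S) (x : US S) : S → ℚ :=
  fun s => (g.1 (truncQ (half_pos (hpos s s.2)) x)).1.1 s

lemma gextCoord_sparse (hpos : ∀ s ∈ S, 0 < s) (g : AutQ S) (x : US S)
    {ε : ℝ} (hε : 0 < ε) :
    {s : S | gextCoord hpos g x s ≠ 0 ∧ ε < (s : ℝ)}.Finite := by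
  apply (sparse (g.1 (truncQ (half_pos hε) x)).1 hε).subset
  intro s hs
  rcases hs with ⟨hne, hgt⟩
  refine ⟨?_, hgt⟩
  have heq : gextCoord hpos g x s = (g.1 (truncQ (half_pos hε) x)).1.1 s := by
    rw [gextCoord]
    exact (indep hpos g x (half_pos hε) (half_pos (hpos s s.2)) (by linarith) s
      (by have := hpos s s.2; linarith)).symm
  rwa [heq] at hne

/-- The extension of `g` to `U_S`. -/
noncomputable def gextF (hpos : ∀ s ∈ S, 0 < s) (hacc : ∀ ε > 0, ∃ s ∈ S, s < ε)
    (g : AutQ S) (x : US S) : US S :=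
  ⟨gextCoord hpos g x, mkUSsupp hpos hacc _ fun _ hε => gextCoord_sparse hpos g x hε⟩

variable {hpos : ∀ s ∈ S, 0 < s} {hacc : ∀ ε > 0, ∃ s ∈ S, s < ε}

/-- The coordinate of the extension can be computed with any threshold. -/
lemma gext_coord (g : AutQ S) (x : US S) {r : ℝ} (hr : 0 < r) (t : S)
    (ht : r < (t : ℝ)) :
    (gextF hpos hacc g x).1 t = (g.1 (truncQ hr x)).1.1 t := by
  show gextCoord hpos g x t = _
  rw [gextCoord]
  rcases le_total r ((t : ℝ) / 2) with h | h
  · exact (indep hpos g x hr (half_pos (hpos t t.2)) h t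
      (by have := hpos t t.2; linarith)).symm
  · exact indep hpos g x (half_pos (hpos t t.2)) hr h t ht

/-- The extension restricted to `Q_S` is `g`. -/
lemma gext_restrict (g : AutQ S) (x : Qsub S) :
    gextF hpos hacc g x.1 = (g.1 x).1 := by
  apply US_ext
  intro s
  have hr : 0 < (s : ℝ) / 2 := half_pos (hpos s s.2)
  rw [gext_coord g x.1 hr s (by have := hpos s s.2; linarith)]
  have hagr : agr S ((s : ℝ)/2) (truncQ hr x.1).1 x.1 := truncF_agr _ _
  exact g_agr hpos g hr hagr s (by have := hpos s s.2; linarith)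

/-- The extension preserves agreement (with its maximum point). -/
lemma gext_agr (g : AutQ S) {x y : US S} {r : ℝ} (hr : 0 < r)
    (h : agr S r x y) : agr S r (gextF hpos hacc g x) (gextF hpos hacc g y) := by
  intro t ht
  rw [gext_coord g x hr t ht, gext_coord g y hr t ht]
  have hagr : agr S r (truncQ hr x).1 (truncQ hr y).1 := by
    intro u hu
    show (truncF r x).1 u = (truncF r y).1 u
    rw [truncF_pos hu, truncF_pos hu]
    exact h u hu
  exact g_agr hpos g hr hagr t ht

/-- Behaviour of the extension at the maximal point of disagreement. -/
lemma gext_max (g : AutQ S) {x y : US S} (s₀ : S) (h1 : x.1 s₀ ≠ y.1 s₀)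
    (h2 : agr S (s₀ : ℝ) x y) :
    ((gextF hpos hacc g x).1 s₀ ≠ (gextF hpos hacc g y).1 s₀) ∧
    ((gextF hpos hacc g x).1 s₀ < (gextF hpos hacc g y).1 s₀ ↔ x.1 s₀ < y.1 s₀) := by
  have hs₀ : 0 < (s₀ : ℝ) := hpos s₀ s₀.2
  have hr : 0 < (s₀ : ℝ) / 2 := by linarith
  have hrs : (s₀ : ℝ) / 2 < (s₀ : ℝ) := by linarith
  set Tx := truncQ hr x with hTx
  set Ty := truncQ hr y with hTy
  have hTxs : Tx.1.1 s₀ = x.1 s₀ := truncF_pos hrs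
  have hTys : Ty.1.1 s₀ = y.1 s₀ := truncF_pos hrs
  have hTne : Tx.1.1 s₀ ≠ Ty.1.1 s₀ := by rw [hTxs, hTys]; exact h1
  have hTagr : agr S (s₀ : ℝ) Tx.1 Ty.1 := by
    intro u hu
    show (truncF ((s₀ : ℝ)/2) x).1 u = (truncF ((s₀ : ℝ)/2) y).1 u
    rw [truncF_pos (lt_trans hrs hu), truncF_pos (lt_trans hrs hu)]
    exact h2 u hu
  have hdT : dU S Tx.1 Ty.1 = (s₀ : ℝ) := dU_eq hpos s₀ hTne hTagr
  have hdG : dU S (g.1 Tx).1 (g.1 Ty).1 = (s₀ : ℝ) := by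
    rw [← dQs_eq_dU hpos, g.2.1, dQs_eq_dU hpos, hdT]
  have hGne : (g.1 Tx).1 ≠ (g.1 Ty).1 := by
    intro h
    rw [h, dU_self] at hdG
    linarith
  obtain ⟨t₀, ht1, ht2⟩ := exists_max_disagree hpos hGne
  have ht₀agr : agr S (t₀ : ℝ) (g.1 Tx).1 (g.1 Ty).1 := fun u hu => by
    by_contra hne; exact absurd (ht2 u hne) (not_le.2 hu)
  have ht₀eq : t₀ = s₀ := by
    apply Subtype.ext
    rw [← hdG, dU_eq hpos t₀ ht1 ht₀agr]
  rw [ht₀eq] at ht1 ht₀agr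
  have hcx : (gextF hpos hacc g x).1 s₀ = (g.1 Tx).1.1 s₀ := gext_coord g x hr s₀ hrs
  have hcy : (gextF hpos hacc g y).1 s₀ = (g.1 Ty).1.1 s₀ := gext_coord g y hr s₀ hrs
  constructor
  · rw [hcx, hcy]; exact ht1
  · rw [hcx, hcy]
    have e1 : (g.1 Tx).1.1 s₀ < (g.1 Ty).1.1 s₀ ↔ lexU S (g.1 Tx).1 (g.1 Ty).1 :=
      (lexU_iff _ _ s₀ ht1 ht₀agr).symm
    have e2 : lexU S (g.1 Tx).1 (g.1 Ty).1 ↔ lexU S Tx.1 Ty.1 := g.2.2 Tx Ty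
    have e3 : lexU S Tx.1 Ty.1 ↔ Tx.1.1 s₀ < Ty.1.1 s₀ := lexU_iff _ _ s₀ hTne hTagr
    rw [e1, e2, e3, hTxs, hTys]

/-- The extension is an isometry. -/
lemma gext_dU (g : AutQ S) (x y : US S) :
    dU S (gextF hpos hacc g x) (gextF hpos hacc g y) = dU S x y := by
  by_cases hxy : x = y
  · subst hxy; rw [dU_self, dU_self]
  · obtain ⟨s₀, h1, h2'⟩ := exists_max_disagree hpos hxy
    have h2 : agr S (s₀ : ℝ) x y := fun t ht => by
      by_contra hne; exact absurd (h2' t hne) (not_le.2 ht)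
    rw [dU_eq hpos s₀ h1 h2]
    exact dU_eq hpos s₀ (gext_max g s₀ h1 h2).1
      (gext_agr g (hpos s₀ s₀.2) h2)

/-- The extension preserves the lexicographic order. -/
lemma gext_lex (g : AutQ S) (x y : US S) :
    lexU S (gextF hpos hacc g x) (gextF hpos hacc g y) ↔ lexU S x y := by
  by_cases hxy : x = y
  · constructor
    · intro h; exact absurd h (lexU_irrefl_of_eq (by rw [hxy]))
    · intro h; exact absurd h (lexU_irrefl_of_eq hxy)
  · obtain ⟨s₀, h1, h2'⟩ := exists_max_disagree hpos hxy
    have h2 : agr S (s₀ : ℝ) x y := fun t ht => by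
      by_contra hne; exact absurd (h2' t hne) (not_le.2 ht)
    rw [lexU_iff _ _ s₀ (gext_max g s₀ h1 h2).1 (gext_agr g (hpos s₀ s₀.2) h2),
      lexU_iff _ _ s₀ h1 h2]
    exact (gext_max (hpos := hpos) (hacc := hacc) g s₀ h1 h2).2

/-- Extensions of mutually inverse automorphisms are mutually inverse. -/
lemma gext_inv (g h : AutQ S) (hinv : ∀ z, h.1 (g.1 z) = z) (x : US S) :
    gextF hpos hacc h (gextF hpos hacc g x) = x := by
  apply US_ext
  intro s
  have hs : 0 < (s : ℝ) := hpos s s.2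
  have hr : 0 < (s : ℝ) / 2 := by linarith
  have hrs : (s : ℝ) / 2 < (s : ℝ) := by linarith
  rw [gext_coord h _ hr s hrs]
  have hagr : agr S ((s : ℝ)/2) (truncQ hr (gextF hpos hacc g x)).1 (g.1 (truncQ hr x)).1 := by
    intro t ht
    show (truncF ((s : ℝ)/2) (gextF hpos hacc g x)).1 t = _
    rw [truncF_pos ht]
    exact gext_coord g x hr t ht
  have := g_agr hpos h hr hagr s hrs
  rw [hinv (truncQ hr x)] at this
  rw [this]
  exact truncF_pos hrs

end ExtAux
namespace ExtAux

variable {S : Set ℝ}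

/-- The inverse of an automorphism of `Q_S`. -/
def ginv (g : AutQ S) : AutQ S :=
  ⟨g.1.symm,
    fun x y => by have := g.2.1 (g.1.symm x) (g.1.symm y); simpa using this.symm,
    fun x y => by have := g.2.2 (g.1.symm x) (g.1.symm y); simpa using this.symm⟩

lemma mulQ_apply (g h : AutQ S) (x : Qsub S) : (g * h).1 x = g.1 (h.1 x) := rfl

lemma mulU_apply (g h : AutU S) (x : US S) : (g * h).1 x = g.1 (h.1 x) := rfl

variable {hpos : ∀ s ∈ S, 0 < s} {hacc : ∀ ε > 0, ∃ s ∈ S, s < ε}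

/-- The extension map from `Aut(Q_S)` to `Aut(U_S)`. -/
noncomputable def Emap (hp : ∀ s ∈ S, 0 < s) (ha : ∀ ε > 0, ∃ s ∈ S, s < ε)
    (g : AutQ S) : AutU S :=
  ⟨{ toFun := gextF hp ha g
     invFun := gextF hp ha (ginv g)
     left_inv := fun x =>
       gext_inv (hpos := hp) (hacc := ha) g (ginv g) (fun z => g.1.symm_apply_apply z) x
     right_inv := fun x =>
       gext_inv (hpos := hp) (hacc := ha) (ginv g) g (fun z => g.1.apply_symm_apply z) x },
   fun x y => gext_dU (hpos := hp) (hacc := ha) g x y,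
   fun x y => gext_lex (hpos := hp) (hacc := ha) g x y⟩

lemma Emap_apply (g : AutQ S) (x : US S) :
    (Emap hpos hacc g).1 x = gextF hpos hacc g x := rfl

lemma Emap_symm_apply (g : AutQ S) (x : US S) :
    (Emap hpos hacc g).1.symm x = gextF hpos hacc (ginv g) x := rfl

lemma Emap_restrict (g : AutQ S) (x : Qsub S) :
    (Emap hpos hacc g).1 x.1 = (g.1 x).1 := gext_restrict (hpos := hpos) (hacc := hacc) g x

/-- Uniqueness of the extension. -/
lemma Emap_unique (g : AutQ S) (h : AutU S)
    (hag : ∀ x : Qsub S, h.1 x.1 = (g.1 x).1) : h = Emap hpos hacc g := by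
  apply Subtype.ext
  apply Equiv.ext
  intro x
  apply US_ext
  intro s
  have hs : 0 < (s : ℝ) := hpos s s.2
  obtain ⟨r, hrS, hrs⟩ := hacc (s : ℝ) hs
  have hr : 0 < r := hpos r hrS
  set T := truncQ hr x with hT
  have h1 : agr S r x T.1 := agr_symm (truncF_agr r x)
  have hd1 : dU S x T.1 ≤ r := (dU_le_iff hpos hr).2 h1
  have hagrh : agr S r (h.1 x) (h.1 T.1) := by
    apply agr_of_dU_le hpos hr
    rw [h.2.1]
    exact hd1
  have hagrE : agr S r (gextF hpos hacc g x) (gextF hpos hacc g T.1) := by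
    apply agr_of_dU_le hpos hr
    rw [gext_dU g]
    exact hd1
  have e1 : (h.1 x).1 s = (g.1 T).1.1 s := by
    rw [hagrh s hrs, hag T]
  have e2 : (gextF hpos hacc g x).1 s = (g.1 T).1.1 s := by
    rw [hagrE s hrs, gext_restrict (hpos := hpos) (hacc := hacc) g T]
  show (h.1 x).1 s = (gextF hpos hacc g x).1 s
  rw [e1, e2]

lemma Emap_injective : Function.Injective (Emap hpos hacc (S := S)) := by
  intro g g' h
  apply Subtype.ext
  apply Equiv.ext
  intro x
  apply Subtype.ext
  rw [← gext_restrict (hpos := hpos) (hacc := hacc) g x,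
    ← gext_restrict (hpos := hpos) (hacc := hacc) g' x]
  rw [← Emap_apply, ← Emap_apply, h]

lemma Emap_mul (g h : AutQ S) :
    Emap hpos hacc (g * h) = Emap hpos hacc g * Emap hpos hacc h := by
  refine (Emap_unique (g * h) (Emap hpos hacc g * Emap hpos hacc h) ?_).symm
  intro x
  rw [mulU_apply, mulQ_apply]
  rw [Emap_restrict h x, Emap_restrict g (h.1 x)]

end ExtAux
namespace ExtAux

variable {S : Set ℝ}

instance : DiscreteTopology (Qsub S) := ⟨rfl⟩

/-- Balls centered at a point form a neighborhood basis in `U_S`. -/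
lemma US_nhds (hpos : ∀ s ∈ S, 0 < s) (u : US S) {N : Set (US S)} (hN : N ∈ nhds u) :
    ∃ ε : ℝ, 0 < ε ∧ {v : US S | dU S u v < ε} ⊆ N := by
  have hg : (inferInstance : TopologicalSpace (US S)) =
      TopologicalSpace.generateFrom
        {B : Set (US S) | ∃ x ε, 0 < ε ∧ B = {y | dU S x y < ε}} := rfl
  set G : Set (Set (US S)) := {B : Set (US S) | ∃ x ε, 0 < ε ∧ B = {y | dU S x y < ε}}
    with hG
  have hnhds : nhds u = ⨅ s ∈ {s | u ∈ s ∧ s ∈ G}, Filter.principal s :=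
    TopologicalSpace.nhds_generateFrom
  have hdir : DirectedOn ((fun s => Filter.principal s) ⁻¹'o (· ≥ ·)) {s | u ∈ s ∧ s ∈ G} := by
    rintro s₁ ⟨hu₁, x₁, ε₁, hε₁, rfl⟩ s₂ ⟨hu₂, x₂, ε₂, hε₂, rfl⟩
    refine ⟨{v : US S | dU S u v < min ε₁ ε₂}, ⟨?_, u, min ε₁ ε₂, lt_min hε₁ hε₂, rfl⟩, ?_, ?_⟩
    · show dU S u u < min ε₁ ε₂
      rw [dU_self]; exact lt_min hε₁ hε₂
    · show Filter.principal _ ≤ Filter.principal _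
      refine Filter.principal_mono.2 (fun v hv => ?_)
      have h1 : dU S x₁ v ≤ max (dU S x₁ u) (dU S u v) := dU_ultra hpos _ _ _
      exact lt_of_le_of_lt h1 (max_lt hu₁ (lt_of_lt_of_le hv (min_le_left _ _)))
    · show Filter.principal _ ≤ Filter.principal _
      refine Filter.principal_mono.2 (fun v hv => ?_)
      have h1 : dU S x₂ v ≤ max (dU S x₂ u) (dU S u v) := dU_ultra hpos _ _ _
      exact lt_of_le_of_lt h1 (max_lt hu₂ (lt_of_lt_of_le hv (min_le_right _ _)))
  have hne : {s | u ∈ s ∧ s ∈ G}.Nonempty := by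
    refine ⟨{v : US S | dU S u v < 1}, ?_, u, 1, one_pos, rfl⟩
    show dU S u u < 1
    rw [dU_self]; exact one_pos
  rw [hnhds, Filter.mem_biInf_of_directed hdir hne] at hN
  obtain ⟨s, ⟨hus, x, ε, hε, rfl⟩, hsN⟩ := hN
  rw [Filter.mem_principal] at hsN
  refine ⟨ε, hε, fun v hv => hsN ?_⟩
  have h1 : dU S x v ≤ max (dU S x u) (dU S u v) := dU_ultra hpos _ _ _
  exact lt_of_le_of_lt h1 (max_lt hus hv)

/-- Continuity of one coordinate evaluation of the extension. -/
lemma cont_coord {hpos : ∀ s ∈ S, 0 < s} {hacc : ∀ ε > 0, ∃ s ∈ S, s < ε}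
    (x : US S) (A : AutQ S → AutQ S) (hA : Continuous fun g : AutQ S => ((A g).1 : Qsub S → Qsub S))
    : Continuous (fun g : AutQ S => gextF hpos hacc (A g) x) := by
  refine continuous_generateFrom_iff.mpr ?_
  rintro B ⟨z, ε, hε, rfl⟩
  rw [isOpen_iff_mem_nhds]
  intro g₀ hg₀
  have hg₀' : dU S z (gextF hpos hacc (A g₀) x) < ε := hg₀
  have hrpos : 0 < ε / 2 := by linarith
  have hopen : IsOpen {f : Qsub S → Qsub S | f (truncQ hrpos x) = (A g₀).1 (truncQ hrpos x)} := by
    have : {f : Qsub S → Qsub S | f (truncQ hrpos x) = (A g₀).1 (truncQ hrpos x)} =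
        (fun f : Qsub S → Qsub S => f (truncQ hrpos x)) ⁻¹'
          {(A g₀).1 (truncQ hrpos x)} := by
      ext f; simp
    rw [this]
    exact (continuous_apply _).isOpen_preimage _ (isOpen_discrete _)
  have hcont : Continuous fun g : AutQ S => ((A g).1 : Qsub S → Qsub S) := hA
  have hopen2 : IsOpen {g : AutQ S |
      (A g).1 (truncQ hrpos x) = (A g₀).1 (truncQ hrpos x)} :=
    hopen.preimage hcont
  apply Filter.mem_of_superset (hopen2.mem_nhds (by simp))
  intro g hg
  have hg' : (A g).1 (truncQ hrpos x) = (A g₀).1 (truncQ hrpos x) := hg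
  show dU S z (gextF hpos hacc (A g) x) < ε
  have hagr : agr S (ε/2) (gextF hpos hacc (A g₀) x) (gextF hpos hacc (A g) x) := by
    intro t ht
    rw [gext_coord (A g₀) x hrpos t ht, gext_coord (A g) x hrpos t ht, hg']
  have h2 : dU S (gextF hpos hacc (A g₀) x) (gextF hpos hacc (A g) x) ≤ ε / 2 :=
    (dU_le_iff hpos hrpos).2 hagr
  have h1 : dU S z (gextF hpos hacc (A g) x) ≤
      max (dU S z (gextF hpos hacc (A g₀) x))
        (dU S (gextF hpos hacc (A g₀) x) (gextF hpos hacc (A g) x)) := dU_ultra hpos _ _ _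
  exact lt_of_le_of_lt h1 (max_lt hg₀' (by linarith))

lemma Emap_continuous {hpos : ∀ s ∈ S, 0 < s} {hacc : ∀ ε > 0, ∃ s ∈ S, s < ε} :
    Continuous (Emap hpos hacc (S := S)) := by
  apply continuous_induced_rng.2
  have hF : Continuous (fun g : AutQ S =>
      ((g.1 : Qsub S → Qsub S), (g.1.symm : Qsub S → Qsub S))) := continuous_induced_dom
  apply Continuous.prodMk
  · apply continuous_pi
    intro x
    exact cont_coord (hpos := hpos) (hacc := hacc) x id hF.fst
  · apply continuous_pi
    intro x
    exact cont_coord (hpos := hpos) (hacc := hacc) x ginv hF.snd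

end ExtAux
namespace ExtAux

variable {S : Set ℝ}

noncomputable def mixF (H : US S → US S) (r : ℝ) (x : Qsub S) : S → ℚ :=
  fun s => if r < (s : ℝ) then (H x.1).1 s else x.1.1 s

lemma mix_sparse (H : US S → US S) (r : ℝ) (x : Qsub S) {ε : ℝ} (hε : 0 < ε) :
    {s : S | mixF H r x s ≠ 0 ∧ ε < (s : ℝ)}.Finite := by
  apply ((sparse (H x.1) hε).union x.2).subset
  intro s hs
  rcases hs with ⟨hne, hgt⟩
  by_cases h : r < (s : ℝ)
  · rw [mixF, if_pos h] at hne
    exact Or.inl ⟨hne, hgt⟩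
  · rw [mixF, if_neg h] at hne
    exact Or.inr hne

noncomputable def mixQ (hp : ∀ s ∈ S, 0 < s) (ha : ∀ ε > 0, ∃ s ∈ S, s < ε)
    (H : US S → US S) (r : ℝ) (hr : 0 < r) (x : Qsub S) : Qsub S :=
  ⟨⟨mixF H r x, mkUSsupp hp ha _ fun _ hε => mix_sparse H r x hε⟩, by
    apply ((sparse (H x.1) hr).union x.2).subset
    intro s hs
    by_cases h : r < (s : ℝ)
    · rw [Set.mem_setOf_eq, show (⟨mixF H r x, _⟩ : US S).1 = mixF H r x from rfl,
        mixF, if_pos h] at hs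
      exact Or.inl ⟨hs, h⟩
    · rw [Set.mem_setOf_eq, show (⟨mixF H r x, _⟩ : US S).1 = mixF H r x from rfl,
        mixF, if_neg h] at hs
      exact Or.inr hs⟩

variable {hpos : ∀ s ∈ S, 0 < s} {hacc : ∀ ε > 0, ∃ s ∈ S, s < ε}

lemma mixQ_hi {H : US S → US S} {r : ℝ} {hr : 0 < r} {x : Qsub S} {s : S}
    (hs : r < (s : ℝ)) : (mixQ hpos hacc H r hr x).1.1 s = (H x.1).1 s := if_pos hs

lemma mixQ_lo {H : US S → US S} {r : ℝ} {hr : 0 < r} {x : Qsub S} {s : S}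
    (hs : ¬ r < (s : ℝ)) : (mixQ hpos hacc H r hr x).1.1 s = x.1.1 s := if_neg hs

lemma iso_agr (hpos : ∀ s ∈ S, 0 < s) {H : US S → US S}
    (Hiso : ∀ x y, dU S (H x) (H y) = dU S x y)
    {r : ℝ} (hr : 0 < r) {x y : US S} (h : agr S r x y) : agr S r (H x) (H y) := by
  apply agr_of_dU_le hpos hr
  rw [Hiso]
  exact (dU_le_iff hpos hr).2 h

lemma mix_inv {H K : US S → US S} {r : ℝ} {hr : 0 < r}
    (Kiso : ∀ x y, dU S (K x) (K y) = dU S x y) (hK : ∀ x, K (H x) = x) (x : Qsub S) :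
    mixQ hpos hacc K r hr (mixQ hpos hacc H r hr x) = x := by
  apply Qsub_ext
  intro s
  by_cases hs : r < (s : ℝ)
  · rw [mixQ_hi hs]
    have hagr : agr S r (mixQ hpos hacc H r hr x).1 (H x.1) := fun t ht => mixQ_hi ht
    have h2 : agr S r (K (mixQ hpos hacc H r hr x).1) (K (H x.1)) :=
      iso_agr hpos Kiso hr hagr
    rw [h2 s hs, hK x.1]
  · rw [mixQ_lo hs, mixQ_lo hs]

lemma mix_dU {H : US S → US S} (Hiso : ∀ x y, dU S (H x) (H y) = dU S x y)
    {r : ℝ} {hr : 0 < r} (x y : Qsub S) :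
    dU S (mixQ hpos hacc H r hr x).1 (mixQ hpos hacc H r hr y).1 = dU S x.1 y.1 := by
  by_cases hxy : x = y
  · subst hxy; rw [dU_self, dU_self]
  · have hxy1 : x.1 ≠ y.1 := fun h => hxy (Subtype.ext h)
    obtain ⟨s₀, h1, h2'⟩ := exists_max_disagree hpos hxy1
    have h2 : agr S (s₀ : ℝ) x.1 y.1 := fun t ht => by
      by_contra hne; exact absurd (h2' t hne) (not_le.2 ht)
    have hs₀ : 0 < (s₀ : ℝ) := hpos s₀ s₀.2
    rw [dU_eq hpos s₀ h1 h2]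
    by_cases hrs : r < (s₀ : ℝ)
    · have hH : dU S (H x.1) (H y.1) = (s₀ : ℝ) := by rw [Hiso, dU_eq hpos s₀ h1 h2]
      have hHne : H x.1 ≠ H y.1 := by
        intro h; rw [h, dU_self] at hH; linarith
      obtain ⟨t₀, ht1, ht2⟩ := exists_max_disagree hpos hHne
      have ht₀agr : agr S (t₀ : ℝ) (H x.1) (H y.1) := fun u hu => by
        by_contra hne; exact absurd (ht2 u hne) (not_le.2 hu)
      have ht₀eq : t₀ = s₀ := Subtype.ext (by rw [← hH, dU_eq hpos t₀ ht1 ht₀agr])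
      rw [ht₀eq] at ht1 ht₀agr
      apply dU_eq hpos s₀
      · rw [mixQ_hi hrs, mixQ_hi hrs]; exact ht1
      · intro t ht
        rw [mixQ_hi (lt_trans hrs ht), mixQ_hi (lt_trans hrs ht)]
        exact ht₀agr t ht
    · have hagrH : agr S (s₀ : ℝ) (H x.1) (H y.1) :=
        iso_agr hpos Hiso hs₀ h2
      apply dU_eq hpos s₀
      · rw [mixQ_lo hrs, mixQ_lo hrs]; exact h1
      · intro t ht
        by_cases hrt : r < (t : ℝ)
        · rw [mixQ_hi hrt, mixQ_hi hrt]
          exact hagrH t ht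
        · rw [mixQ_lo hrt, mixQ_lo hrt]
          exact h2 t ht

lemma mix_lex {H : US S → US S} (Hiso : ∀ x y, dU S (H x) (H y) = dU S x y)
    (Hlex : ∀ x y, lexU S (H x) (H y) ↔ lexU S x y)
    {r : ℝ} {hr : 0 < r} (x y : Qsub S) :
    lexU S (mixQ hpos hacc H r hr x).1 (mixQ hpos hacc H r hr y).1 ↔ lexU S x.1 y.1 := by
  by_cases hxy : x = y
  · subst hxy
    constructor
    · intro h; exact absurd h (lexU_irrefl_of_eq rfl)
    · intro h; exact absurd h (lexU_irrefl_of_eq rfl)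
  · have hxy1 : x.1 ≠ y.1 := fun h => hxy (Subtype.ext h)
    obtain ⟨s₀, h1, h2'⟩ := exists_max_disagree hpos hxy1
    have h2 : agr S (s₀ : ℝ) x.1 y.1 := fun t ht => by
      by_contra hne; exact absurd (h2' t hne) (not_le.2 ht)
    have hs₀ : 0 < (s₀ : ℝ) := hpos s₀ s₀.2
    rw [lexU_iff x.1 y.1 s₀ h1 h2]
    by_cases hrs : r < (s₀ : ℝ)
    · have hH : dU S (H x.1) (H y.1) = (s₀ : ℝ) := by rw [Hiso, dU_eq hpos s₀ h1 h2]
      have hHne : H x.1 ≠ H y.1 := by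
        intro h; rw [h, dU_self] at hH; linarith
      obtain ⟨t₀, ht1, ht2⟩ := exists_max_disagree hpos hHne
      have ht₀agr : agr S (t₀ : ℝ) (H x.1) (H y.1) := fun u hu => by
        by_contra hne; exact absurd (ht2 u hne) (not_le.2 hu)
      have ht₀eq : t₀ = s₀ := Subtype.ext (by rw [← hH, dU_eq hpos t₀ ht1 ht₀agr])
      rw [ht₀eq] at ht1 ht₀agr
      have hmne : (mixQ hpos hacc H r hr x).1.1 s₀ ≠ (mixQ hpos hacc H r hr y).1.1 s₀ := by
        rw [mixQ_hi hrs, mixQ_hi hrs]; exact ht1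
      have hmagr : agr S (s₀ : ℝ) (mixQ hpos hacc H r hr x).1 (mixQ hpos hacc H r hr y).1 := by
        intro t ht
        rw [mixQ_hi (lt_trans hrs ht), mixQ_hi (lt_trans hrs ht)]
        exact ht₀agr t ht
      rw [lexU_iff _ _ s₀ hmne hmagr, mixQ_hi hrs, mixQ_hi hrs,
        ← lexU_iff (H x.1) (H y.1) s₀ ht1 ht₀agr,
        ← lexU_iff x.1 y.1 s₀ h1 h2]
      exact Hlex x.1 y.1
    · have hagrH : agr S (s₀ : ℝ) (H x.1) (H y.1) := iso_agr hpos Hiso hs₀ h2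
      have hmne : (mixQ hpos hacc H r hr x).1.1 s₀ ≠ (mixQ hpos hacc H r hr y).1.1 s₀ := by
        rw [mixQ_lo hrs, mixQ_lo hrs]; exact h1
      have hmagr : agr S (s₀ : ℝ) (mixQ hpos hacc H r hr x).1 (mixQ hpos hacc H r hr y).1 := by
        intro t ht
        by_cases hrt : r < (t : ℝ)
        · rw [mixQ_hi hrt, mixQ_hi hrt]; exact hagrH t ht
        · rw [mixQ_lo hrt, mixQ_lo hrt]; exact h2 t ht
      rw [lexU_iff _ _ s₀ hmne hmagr, mixQ_lo hrs, mixQ_lo hrs]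

lemma hsymm_dU (h : AutU S) (x y : US S) :
    dU S (h.1.symm x) (h.1.symm y) = dU S x y := by
  have := h.2.1 (h.1.symm x) (h.1.symm y); simpa using this.symm

lemma hsymm_lex (h : AutU S) (x y : US S) :
    lexU S (h.1.symm x) (h.1.symm y) ↔ lexU S x y := by
  have := h.2.2 (h.1.symm x) (h.1.symm y); simpa using this.symm

/-- A `Q_S`-automorphism approximating a given `U_S`-automorphism up to `r`. -/
noncomputable def qmap (hp : ∀ s ∈ S, 0 < s) (ha : ∀ ε > 0, ∃ s ∈ S, s < ε)
    (h : AutU S) (r : ℝ) (hr : 0 < r) : AutQ S :=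
  ⟨{ toFun := mixQ hp ha h.1 r hr
     invFun := mixQ hp ha h.1.symm r hr
     left_inv := mix_inv (hpos := hp) (hacc := ha)
       (hsymm_dU h) (fun x => h.1.symm_apply_apply x)
     right_inv := mix_inv (hpos := hp) (hacc := ha)
       h.2.1 (fun x => h.1.apply_symm_apply x) },
   fun x y => by
     show dQs S (mixQ hp ha h.1 r hr x) (mixQ hp ha h.1 r hr y) = dQs S x y
     rw [dQs_eq_dU hp, dQs_eq_dU hp]
     exact mix_dU (hpos := hp) (hacc := ha) (hr := hr) h.2.1 x y,
   fun x y => by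
     show lexU S (mixQ hp ha h.1 r hr x).1 (mixQ hp ha h.1 r hr y).1 ↔ lexU S x.1 y.1
     exact mix_lex (hpos := hp) (hacc := ha) (hr := hr) h.2.1 h.2.2 x y⟩

/-- The extension of an approximating automorphism stays close to the original. -/
lemma qmap_approx (g' : AutQ S) (H : US S → US S)
    (Hiso : ∀ x y, dU S (H x) (H y) = dU S x y) {r : ℝ} (hr : 0 < r)
    (hg' : ∀ (z : Qsub S) (s : S), r < (s : ℝ) → (g'.1 z).1.1 s = (H z.1).1 s)
    (u : US S) : agr S r (gextF hpos hacc g' u) (H u) := by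
  intro s hs
  have hsh : 0 < (s : ℝ) / 2 := half_pos (hpos s s.2)
  have hsh2 : (s : ℝ) / 2 < (s : ℝ) := by have := hpos s s.2; linarith
  rw [gext_coord g' u hsh s hsh2, hg' _ s hs]
  have hagr : agr S ((s : ℝ)/2) (truncQ hsh u).1 u := truncF_agr _ _
  exact iso_agr hpos Hiso hsh hagr s hsh2

lemma Emap_dense {hpos : ∀ s ∈ S, 0 < s} {hacc : ∀ ε > 0, ∃ s ∈ S, s < ε} :
    DenseRange (Emap hpos hacc (S := S)) := by
  intro h
  rw [mem_closure_iff_nhds]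
  intro N hN
  obtain ⟨M, hM, hMN⟩ := (mem_nhds_induced
    (fun g : AutU S => ((g.1 : US S → US S), (g.1.symm : US S → US S))) h N).1 hN
  rw [mem_nhds_prod_iff] at hM
  obtain ⟨M₁, hM₁, M₂, hM₂, hM12⟩ := hM
  rw [nhds_pi, Filter.mem_pi] at hM₁ hM₂
  obtain ⟨I, hIfin, V, hV, hVsub⟩ := hM₁
  obtain ⟨J, hJfin, W, hW, hWsub⟩ := hM₂
  choose ε hεpos hεsub using fun i => US_nhds hpos (h.1 i) (hV i)
  choose δ hδpos hδsub using fun j => US_nhds hpos (h.1.symm j) (hW j)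
  set K : Set ℝ := insert 1 ((ε '' I) ∪ (δ '' J)) with hK
  have hKfin : K.Finite := (Set.Finite.union (hIfin.image ε) (hJfin.image δ)).insert 1
  have hKne : K.Nonempty := ⟨1, Set.mem_insert _ _⟩
  set r : ℝ := sInf K with hrdef
  have hrK : r ∈ K := hKne.csInf_mem hKfin
  have hrpos : 0 < r := by
    rcases Set.mem_insert_iff.1 hrK with h1 | h1
    · rw [h1]; exact one_pos
    · rcases h1 with ⟨i, -, he⟩ | ⟨j, -, he⟩
      · rw [← he]; exact hεpos i
      · rw [← he]; exact hδpos j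
  have hr2 : 0 < r / 2 := by linarith
  set g : AutQ S := qmap hpos hacc h (r/2) hr2 with hg
  have happrox1 : ∀ u : US S, agr S (r/2) (gextF hpos hacc g u) (h.1 u) :=
    qmap_approx g h.1 h.2.1 hr2 (fun z s hs => by
      show (mixQ hpos hacc h.1 (r/2) hr2 z).1.1 s = (h.1 z.1).1 s
      exact mixQ_hi hs)
  have happrox2 : ∀ u : US S, agr S (r/2) (gextF hpos hacc (ginv g) u) (h.1.symm u) :=
    qmap_approx (ginv g) h.1.symm (hsymm_dU h) hr2 (fun z s hs => by
      show (mixQ hpos hacc h.1.symm (r/2) hr2 z).1.1 s = (h.1.symm z.1).1 s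
      exact mixQ_hi hs)
  refine ⟨Emap hpos hacc g, hMN ?_, g, rfl⟩
  apply hM12
  constructor
  · apply hVsub
    intro i hi
    apply hεsub i
    show dU S (h.1 i) ((Emap hpos hacc g).1 i) < ε i
    have h1 : dU S (h.1 i) (gextF hpos hacc g i) ≤ r / 2 :=
      (dU_le_iff hpos hr2).2 (agr_symm (happrox1 i))
    have h2 : r ≤ ε i := csInf_le hKfin.bddBelow
      (Set.mem_insert_iff.2 (Or.inr (Or.inl ⟨i, hi, rfl⟩)))
    calc dU S (h.1 i) ((Emap hpos hacc g).1 i) ≤ r / 2 := h1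
      _ < r := by linarith
      _ ≤ ε i := h2
  · apply hWsub
    intro j hj
    apply hδsub j
    show dU S (h.1.symm j) ((Emap hpos hacc g).1.symm j) < δ j
    have h1 : dU S (h.1.symm j) (gextF hpos hacc (ginv g) j) ≤ r / 2 :=
      (dU_le_iff hpos hr2).2 (agr_symm (happrox2 j))
    have h2 : r ≤ δ j := csInf_le hKfin.bddBelow
      (Set.mem_insert_iff.2 (Or.inr (Or.inr ⟨j, hj, rfl⟩)))
    calc dU S (h.1.symm j) ((Emap hpos hacc g).1.symm j) ≤ r / 2 := h1
      _ < r := by linarith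
      _ ≤ δ j := h2

end ExtAux
/-- Every element of `Aut(Q_S, <lex)` extends uniquely to an element of
`Aut(U_S, <lex)`, and the extension map is an injective continuous group homomorphism
with dense range. -/
theorem extension_embedding_dense
    (S : Set ℝ) (hScount : S.Countable) (hSpos : ∀ s ∈ S, 0 < s)
    (hacc : ∀ ε > 0, ∃ s ∈ S, s < ε) :
    ∃ E : AutQ S → AutU S,
      (∀ g : AutQ S, ∀ x : Qsub S, (E g).1 x.1 = (g.1 x).1) ∧
      (∀ (g : AutQ S) (h : AutU S), (∀ x : Qsub S, h.1 x.1 = (g.1 x).1) → h = E g) ∧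
      Function.Injective E ∧
      Continuous E ∧
      (∀ g h : AutQ S, E (g * h) = E g * E h) ∧
      DenseRange E := by
  refine ⟨ExtAux.Emap hSpos hacc, ?_, ?_, ?_, ?_, ?_, ?_⟩
  · exact fun g x => ExtAux.Emap_restrict (hpos := hSpos) (hacc := hacc) g x
  · exact fun g h hh => ExtAux.Emap_unique (hpos := hSpos) (hacc := hacc) g h hh
  · exact ExtAux.Emap_injective (hpos := hSpos) (hacc := hacc)
  · exact ExtAux.Emap_continuous (hpos := hSpos) (hacc := hacc)
  · exact fun g h => ExtAux.Emap_mul (hpos := hSpos) (hacc := hacc) g h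
  · exact ExtAux.Emap_dense (hpos := hSpos) (hacc := hacc)
end

section
/- Let S be a countable set of positive reals having 0 as an accumulation point, and let G = iso(U_S) be the group of bijective self-isometries of U_S with the topology of pointwise convergence on the metric space U_S. Then for every convex linear ordering ≺ on U_S, the orbit {≺^g : g ∈ G} of ≺ under the action x ≺^g y iff g^{-1}(x) ≺ g^{-1}(y) is dense in the space cLO(U_S) of convex linear orderings of U_S (topologized as a subspace of 2^{U_S × U_S}); that is, the G-flow cLO(U_S) is minimal. -/
open Classical

/-- The group `iso(U_S)` of bijective self-isometries of `U_S`. -/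
def IsoU (S : Set ℝ) := {g : US S ≃ US S // ∀ x y, dU S (g x) (g y) = dU S x y}

/-- The space `cLO(U_S)` of convex linear orderings of `U_S` (as Boolean relations),
a subspace of `2^{U_S × U_S}` with the product topology. -/
def cLOU (S : Set ℝ) :=
  {r : US S → US S → Bool // IsConvexSTO (dU S) (fun x y => r x y = true)}

instance (S : Set ℝ) : TopologicalSpace (cLOU S) :=
  inferInstanceAs (TopologicalSpace
    {r : US S → US S → Bool // IsConvexSTO (dU S) (fun x y => r x y = true)})

/-- The action of `iso(U_S)` on `cLO(U_S)` : `x <^g y` iff `g⁻¹ x < g⁻¹ y`. -/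
def actU (S : Set ℝ) (g : IsoU S) (r : cLOU S) : cLOU S :=
  ⟨fun x y => r.1 (g.1.symm x) (g.1.symm y), by
    obtain ⟨⟨hirr, htr, htri⟩, hconv⟩ := r.2
    have e : ∀ a b : US S, dU S (g.1.symm a) (g.1.symm b) = dU S a b := by
      intro a b
      have := g.2 (g.1.symm a) (g.1.symm b)
      simpa using this.symm
    refine ⟨⟨fun x => hirr _, fun x y z hxy hyz => htr _ _ _ hxy hyz, fun x y => ?_⟩,
      fun x y z hxy hyz => ?_⟩
    · rcases htri (g.1.symm x) (g.1.symm y) with h | h | h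
      · exact Or.inl h
      · exact Or.inr (Or.inl (g.1.symm.injective h))
      · exact Or.inr (Or.inr h)
    · have h := hconv _ _ _ hxy hyz
      simpa only [e] using h⟩



namespace CLOUProof

open Filter Set

variable {S : Set ℝ}

lemma finite_above {f : ℕ → ℝ} (hf : Filter.Tendsto f Filter.atTop (nhds 0)) {ε : ℝ}
    (hε : 0 < ε) : (Set.range f ∩ Set.Ici ε).Finite := by
  have h : ∀ᶠ n in Filter.atTop, f n < ε := hf.eventually (eventually_lt_nhds hε)
  obtain ⟨N, hN⟩ := Filter.eventually_atTop.1 h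
  apply Set.Finite.subset ((Set.finite_Iio N).image f)
  rintro v ⟨⟨n, rfl⟩, hv⟩
  refine ⟨n, ?_, rfl⟩
  rw [Set.mem_Iio]
  by_contra h'
  push_neg at h'
  exact absurd (hN n h') (not_lt.2 hv)

lemma exists_first_below {f : ℕ → ℝ} (hf : StrictAnti f)
    (hf0 : Filter.Tendsto f Filter.atTop (nhds 0)) {v : ℝ} (hv : 0 < v) :
    ∃ w, w ∈ Set.range f ∧ w < v ∧ ∀ i, f i < v → f i ≤ w := by
  have hex : ∃ i, f i < v := by
    have h : ∀ᶠ n in Filter.atTop, f n < v := hf0.eventually (eventually_lt_nhds hv)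
    obtain ⟨N, hN⟩ := Filter.eventually_atTop.1 h
    exact ⟨N, hN N le_rfl⟩
  refine ⟨f (Nat.find hex), ⟨_, rfl⟩, Nat.find_spec hex, fun i hi => ?_⟩
  have : Nat.find hex ≤ i := Nat.find_min' hex hi
  exact hf.antitone this

/-- A strictly decreasing null sequence in `S` starting at a prescribed element. -/
lemma exists_base (hSpos : ∀ s ∈ S, 0 < s) (hacc : ∀ ε > 0, ∃ s ∈ S, s < ε)
    {M : ℝ} (hM : M ∈ S) :
    ∃ f : ℕ → ℝ, StrictAnti f ∧ (∀ i, f i ∈ S) ∧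
      Filter.Tendsto f Filter.atTop (nhds 0) ∧ f 0 = M := by
  have hch : ∀ v : ℝ, 0 < v → ∃ s, s ∈ S ∧ s < v := by
    intro v hv; obtain ⟨s, hs, hlt⟩ := hacc v hv; exact ⟨s, hs, hlt⟩
  have hrec : ∀ (p : {v : ℝ // v ∈ S}) (n : ℕ), ∃ w : {v : ℝ // v ∈ S},
      w.1 < p.1 ∧ w.1 < 1 / (n + 1) := by
    intro p n
    have hp : 0 < p.1 := hSpos _ p.2
    have hmin : 0 < min p.1 (1 / (n + 1)) := by positivity
    obtain ⟨s, hs, hlt⟩ := hch _ hmin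
    exact ⟨⟨s, hs⟩, lt_of_lt_of_le hlt (min_le_left _ _), lt_of_lt_of_le hlt (min_le_right _ _)⟩
  choose step hstep1 hstep2 using hrec
  let F : ℕ → {v : ℝ // v ∈ S} := fun n => Nat.rec ⟨M, hM⟩ (fun n p => step p n) n
  have hFsucc : ∀ n, F (n + 1) = step (F n) n := fun n => rfl
  refine ⟨fun n => (F n).1, ?_, fun i => (F i).2, ?_, ?_⟩
  · apply strictAnti_nat_of_succ_lt
    intro n
    rw [hFsucc n]
    exact hstep1 (F n) n
  · apply tendsto_order.2
    constructor
    · intro a ha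
      filter_upwards with n
      exact lt_of_lt_of_le ha (le_of_lt (hSpos _ (F n).2))
    · intro b hb
      obtain ⟨n₀, hn₀⟩ := exists_nat_one_div_lt hb
      rw [Filter.eventually_atTop]
      refine ⟨n₀ + 1, fun n hn => ?_⟩
      have h1 : (F (n₀ + 1)).1 < 1 / (n₀ + 1) := by rw [hFsucc]; exact hstep2 (F n₀) n₀
      have h2 : (F n).1 ≤ (F (n₀ + 1)).1 := by
        rcases eq_or_lt_of_le hn with h | h
        · rw [h]
        · have : StrictAnti (fun n => (F n).1) := by
            apply strictAnti_nat_of_succ_lt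
            intro m; rw [hFsucc m]; exact hstep1 (F m) m
          exact le_of_lt (this h)
      calc (F n).1 ≤ _ := h2
        _ < 1 / (n₀ + 1) := h1
        _ < b := by exact_mod_cast hn₀
  · rfl

/-- Merging two strictly decreasing null `S`-sequences. -/
lemma merge_seq (hSpos : ∀ s ∈ S, 0 < s) {f g : ℕ → ℝ}
    (hf : StrictAnti f) (hfS : ∀ i, f i ∈ S) (hf0 : Filter.Tendsto f Filter.atTop (nhds 0))
    (hg : StrictAnti g) (hgS : ∀ i, g i ∈ S) (hg0 : Filter.Tendsto g Filter.atTop (nhds 0)) :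
    ∃ h : ℕ → ℝ, StrictAnti h ∧ (∀ i, h i ∈ S) ∧
      Filter.Tendsto h Filter.atTop (nhds 0) ∧
      Set.range f ∪ Set.range g ⊆ Set.range h := by
  have hfpos : ∀ i, 0 < f i := fun i => hSpos _ (hfS i)
  have hgpos : ∀ i, 0 < g i := fun i => hSpos _ (hgS i)
  have hnf := fun (v : ℝ) (hv : 0 < v) => exists_first_below hf hf0 hv
  have hng := fun (v : ℝ) (hv : 0 < v) => exists_first_below hg hg0 hv
  choose nf hnf1 hnf2 hnf3 using hnf
  choose ng hng1 hng2 hng3 using hng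
  have hmem0 : max (f 0) (g 0) ∈ Set.range f ∪ Set.range g ∧ 0 < max (f 0) (g 0) := by
    constructor
    · rcases max_choice (f 0) (g 0) with h | h <;> rw [h]
      · exact Or.inl ⟨0, rfl⟩
      · exact Or.inr ⟨0, rfl⟩
    · exact lt_max_of_lt_left (hfpos 0)
  have hrec : ∀ p : {v : ℝ // v ∈ Set.range f ∪ Set.range g ∧ 0 < v},
      ∃ w : {v : ℝ // v ∈ Set.range f ∪ Set.range g ∧ 0 < v},
        w.1 < p.1 ∧ (∀ i, f i < p.1 → f i ≤ w.1) ∧ (∀ i, g i < p.1 → g i ≤ w.1) := by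
    rintro ⟨v, hv1, hv2⟩
    refine ⟨⟨max (nf v hv2) (ng v hv2), ?_, ?_⟩, ?_, ?_, ?_⟩
    · rcases max_choice (nf v hv2) (ng v hv2) with h | h <;> rw [h]
      · exact Or.inl (hnf1 v hv2)
      · exact Or.inr (hng1 v hv2)
    · obtain ⟨i, hi⟩ := hnf1 v hv2
      exact lt_max_of_lt_left (hi ▸ hfpos i)
    · exact max_lt (hnf2 v hv2) (hng2 v hv2)
    · intro i hi; exact le_max_of_le_left (hnf3 v hv2 i hi)
    · intro i hi; exact le_max_of_le_right (hng3 v hv2 i hi)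
  choose step hstep1 hstep2 hstep3 using hrec
  let H : ℕ → {v : ℝ // v ∈ Set.range f ∪ Set.range g ∧ 0 < v} :=
    fun n => Nat.rec ⟨max (f 0) (g 0), hmem0⟩ (fun _ p => step p) n
  have hHsucc : ∀ n, H (n + 1) = step (H n) := fun n => rfl
  have hanti : StrictAnti (fun n => (H n).1) := by
    apply strictAnti_nat_of_succ_lt
    intro n; rw [hHsucc]; exact hstep1 (H n)
  have hmem : ∀ n, (H n).1 ∈ Set.range f ∪ Set.range g := fun n => (H n).2.1
  have hS : ∀ n, (H n).1 ∈ S := by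
    intro n; rcases hmem n with ⟨i, hi⟩ | ⟨i, hi⟩
    · rw [← hi]; exact hfS i
    · rw [← hi]; exact hgS i
  have hkey : ∀ n v, v ∈ Set.range f ∪ Set.range g → v < (H n).1 → v ≤ (H (n+1)).1 := by
    rintro n v (⟨i, rfl⟩ | ⟨i, rfl⟩) hv
    · rw [hHsucc]; exact hstep2 (H n) i hv
    · rw [hHsucc]; exact hstep3 (H n) i hv
  have htend : Filter.Tendsto (fun n => (H n).1) Filter.atTop (nhds 0) := by
    apply tendsto_order.2
    constructor
    · intro a ha
      filter_upwards with n
      exact lt_of_lt_of_le ha (le_of_lt (H n).2.2)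
    · intro b hb
      by_contra hcon
      rw [Filter.not_eventually] at hcon
      have hall : ∀ n, b ≤ (H n).1 := by
        intro n
        obtain ⟨m, hm, hm2⟩ := (Filter.frequently_atTop.1 hcon) n
        have := not_lt.1 hm2
        exact le_trans this (hanti.antitone hm)
      have hfin : (Set.range (fun n => (H n).1)).Finite := by
        apply Set.Finite.subset (((finite_above hf0 hb).union (finite_above hg0 hb)))
        rintro v ⟨n, rfl⟩
        rcases hmem n with h | h
        · exact Or.inl ⟨h, hall n⟩
        · exact Or.inr ⟨h, hall n⟩
      exact (Set.infinite_range_of_injective hanti.injective) hfin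
  refine ⟨fun n => (H n).1, hanti, hS, htend, ?_⟩
  intro v hv
  by_contra hvr
  have hle : ∀ n, v ≤ (H n).1 := by
    intro n
    induction n with
    | zero =>
      rcases hv with ⟨i, rfl⟩ | ⟨i, rfl⟩
      · exact le_trans (hf.antitone (Nat.zero_le i)) (le_max_left _ _)
      · exact le_trans (hg.antitone (Nat.zero_le i)) (le_max_right _ _)
    | succ n ih =>
      have hne : v ≠ (H n).1 := by
        intro h; exact hvr ⟨n, h.symm⟩
      exact hkey n v hv (lt_of_le_of_ne ih hne)
  have hvpos : 0 < v := by
    rcases hv with ⟨i, rfl⟩ | ⟨i, rfl⟩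
    · exact hfpos i
    · exact hgpos i
  have : ∀ᶠ n in Filter.atTop, (H n).1 < v := htend.eventually (eventually_lt_nhds hvpos)
  obtain ⟨N, hN⟩ := Filter.eventually_atTop.1 this
  exact absurd (hle N) (not_le.2 (hN N le_rfl))

lemma ussupp_mono (hSpos : ∀ s ∈ S, 0 < s) {x y z : S → ℚ} (hx : USsupp S x)
    (hy : USsupp S y) (h : ∀ s, z s ≠ 0 → x s ≠ 0 ∨ y s ≠ 0) : USsupp S z := by
  obtain ⟨f, hf, hfS, hf0, hfsupp⟩ := hx
  obtain ⟨g, hg, hgS, hg0, hgsupp⟩ := hy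
  obtain ⟨hh, hanti, hhS, hh0, hcov⟩ := merge_seq hSpos hf hfS hf0 hg hgS hg0
  refine ⟨hh, hanti, hhS, hh0, ?_⟩
  intro s hs
  rcases h s hs with h' | h'
  · obtain ⟨i, hi⟩ := hfsupp s h'
    obtain ⟨j, hj⟩ := hcov (Or.inl ⟨i, hi.symm⟩)
    exact ⟨j, hj.symm⟩
  · obtain ⟨i, hi⟩ := hgsupp s h'
    obtain ⟨j, hj⟩ := hcov (Or.inr ⟨i, hi.symm⟩)
    exact ⟨j, hj.symm⟩

lemma ussupp_zero (hSpos : ∀ s ∈ S, 0 < s) (hacc : ∀ ε > 0, ∃ s ∈ S, s < ε) :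
    USsupp S (fun _ => (0 : ℚ)) := by
  obtain ⟨s₁, hs₁, _⟩ := hacc 1 one_pos
  obtain ⟨f, h1, h2, h3, _⟩ := exists_base hSpos hacc hs₁
  exact ⟨f, h1, h2, h3, fun s hs => absurd rfl hs⟩

lemma usne {x y : US S} (h : x ≠ y) : ∃ s : S, x.1 s ≠ y.1 s := by
  by_contra hc
  push_neg at hc
  exact h (Subtype.ext (funext fun s => hc s))

lemma dU_spec (hSpos : ∀ s ∈ S, 0 < s) {x y : US S} (h : x ≠ y) :
    ∃ s₀ : S, dU S x y = (s₀ : ℝ) ∧ x.1 s₀ ≠ y.1 s₀ ∧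
      ∀ t : S, (s₀ : ℝ) < (t : ℝ) → x.1 t = y.1 t := by
  obtain ⟨e, he⟩ := usne h
  have hepos : (0:ℝ) < e := hSpos _ e.2
  obtain ⟨f, hf, hfS, hf0, hfsupp⟩ := x.2
  obtain ⟨g, hg, hgS, hg0, hgsupp⟩ := y.2
  have hrange : ∀ s : S, x.1 s ≠ y.1 s → (s:ℝ) ∈ Set.range f ∪ Set.range g := by
    intro s hs
    by_cases hx0 : x.1 s = 0
    · have : y.1 s ≠ 0 := fun h0 => hs (by rw [hx0, h0])
      exact Or.inr (by obtain ⟨i, hi⟩ := hgsupp s this; exact ⟨i, hi.symm⟩)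
    · exact Or.inl (by obtain ⟨i, hi⟩ := hfsupp s hx0; exact ⟨i, hi.symm⟩)
  set A : Set ℝ := {r : ℝ | (∃ s : S, (s:ℝ) = r ∧ x.1 s ≠ y.1 s) ∧ (e:ℝ) ≤ r} with hA
  have hAfin : A.Finite := by
    apply Set.Finite.subset (((finite_above hf0 hepos).union (finite_above hg0 hepos)))
    rintro r ⟨⟨s, rfl, hs⟩, hr⟩
    rcases hrange s hs with h' | h'
    · exact Or.inl ⟨h', hr⟩
    · exact Or.inr ⟨h', hr⟩
  have hAne : A.Nonempty := ⟨e, ⟨e, rfl, he⟩, le_rfl⟩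
  obtain ⟨a, haA, hamax⟩ : ∃ a ∈ A, ∀ r ∈ A, id a ≤ id r → id a = id r := by
    obtain ⟨a, ha, hm⟩ := Set.Finite.exists_maximalFor id A hAfin hAne
    exact ⟨a, ha, fun r hr h => le_antisymm h (hm hr h)⟩
  have hmax : ∀ r ∈ A, r ≤ a := by
    intro r hr
    by_contra hc
    push_neg at hc
    exact absurd (hamax r hr (le_of_lt hc)) (ne_of_lt hc)
  obtain ⟨⟨s₀, hs₀a, hs₀d⟩, hea⟩ := haA
  have hs₀max : ∀ s : S, x.1 s ≠ y.1 s → (s:ℝ) ≤ (s₀:ℝ) := by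
    intro s hs
    rcases le_or_gt (e:ℝ) (s:ℝ) with h' | h'
    · rw [hs₀a]; exact hmax _ ⟨⟨s, rfl, hs⟩, h'⟩
    · rw [hs₀a]; exact le_trans (le_of_lt h') (hmax _ ⟨⟨e, rfl, he⟩, le_rfl⟩)
  have habove : ∀ t : S, (s₀ : ℝ) < (t : ℝ) → x.1 t = y.1 t := by
    intro t ht
    by_contra hc
    exact absurd (hs₀max t hc) (not_le.2 ht)
  refine ⟨s₀, ?_, hs₀d, habove⟩
  rw [dU, if_neg h]
  have hmemT : (s₀:ℝ) ∈ {r : ℝ | r ∈ S ∧ ∀ t : S, r < (t:ℝ) → x.1 t = y.1 t} :=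
    ⟨s₀.2, habove⟩
  have hlb : ∀ r ∈ {r : ℝ | r ∈ S ∧ ∀ t : S, r < (t:ℝ) → x.1 t = y.1 t}, (s₀:ℝ) ≤ r := by
    rintro r ⟨hrS, hrag⟩
    by_contra hc
    push_neg at hc
    exact hs₀d (hrag s₀ hc)
  exact le_antisymm (csInf_le ⟨(s₀:ℝ), hlb⟩ hmemT) (le_csInf ⟨_, hmemT⟩ hlb)

lemma dU_self (x : US S) : dU S x x = 0 := if_pos rfl

lemma dU_nonneg (hSpos : ∀ s ∈ S, 0 < s) (x y : US S) : 0 ≤ dU S x y := by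
  by_cases h : x = y
  · rw [h, dU_self]
  · obtain ⟨s₀, h1, _, _⟩ := dU_spec hSpos h
    rw [h1]
    exact le_of_lt (hSpos _ s₀.2)

lemma dU_pos (hSpos : ∀ s ∈ S, 0 < s) {x y : US S} (h : x ≠ y) : 0 < dU S x y := by
  obtain ⟨s₀, h1, _, _⟩ := dU_spec hSpos h
  rw [h1]
  exact hSpos _ s₀.2

lemma dU_mem_S (hSpos : ∀ s ∈ S, 0 < s) {x y : US S} (h : x ≠ y) : dU S x y ∈ S := by
  obtain ⟨s₀, h1, _, _⟩ := dU_spec hSpos h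
  rw [h1]
  exact s₀.2

lemma dU_comm (x y : US S) : dU S x y = dU S y x := by
  by_cases h : x = y
  · rw [h]
  · rw [dU, dU, if_neg h, if_neg (Ne.symm h)]
    congr 1
    ext r
    simp only [Set.mem_setOf_eq, and_congr_right_iff]
    intro _
    constructor <;> intro h' t ht <;> exact (h' t ht).symm

lemma dU_eq_coord (hSpos : ∀ s ∈ S, 0 < s) {x y : US S} {s₀ : S}
    (hne : x.1 s₀ ≠ y.1 s₀) (hab : ∀ t : S, (s₀:ℝ) < (t:ℝ) → x.1 t = y.1 t) :
    dU S x y = (s₀:ℝ) := by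
  have h : x ≠ y := fun h => hne (by rw [h])
  obtain ⟨s₁, h1, h2, h3⟩ := dU_spec hSpos h
  rw [h1]
  rcases lt_trichotomy ((s₁:ℝ)) ((s₀:ℝ)) with h' | h' | h'
  · exact absurd (h3 s₀ h') hne
  · exact h'
  · exact absurd (hab s₁ h') h2

lemma agree_of_dU_lt (hSpos : ∀ s ∈ S, 0 < s) {x y : US S} {t : S}
    (h : dU S x y < (t:ℝ)) : x.1 t = y.1 t := by
  by_cases hxy : x = y
  · rw [hxy]
  · obtain ⟨s₀, h1, _, h3⟩ := dU_spec hSpos hxy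
    rw [h1] at h
    exact h3 t h

lemma dU_le_of_agree (hSpos : ∀ s ∈ S, 0 < s) {x y : US S} {d : ℝ} (hd : 0 ≤ d)
    (h : ∀ t : S, d < (t:ℝ) → x.1 t = y.1 t) : dU S x y ≤ d := by
  by_cases hxy : x = y
  · rw [hxy, dU_self]; exact hd
  · obtain ⟨s₀, h1, h2, _⟩ := dU_spec hSpos hxy
    rw [h1]
    by_contra hc
    push_neg at hc
    exact h2 (h s₀ hc)

lemma dU_lt_of_agree_ge (hSpos : ∀ s ∈ S, 0 < s) {x y : US S} {d : ℝ} (hd : 0 < d)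
    (h : ∀ t : S, d ≤ (t:ℝ) → x.1 t = y.1 t) : dU S x y < d := by
  by_cases hxy : x = y
  · rw [hxy, dU_self]; exact hd
  · obtain ⟨s₀, h1, h2, _⟩ := dU_spec hSpos hxy
    rw [h1]
    by_contra hc
    push_neg at hc
    exact h2 (h s₀ hc)

lemma coord_le_dU (hSpos : ∀ s ∈ S, 0 < s) {x y : US S} {t : S}
    (h : x.1 t ≠ y.1 t) : (t:ℝ) ≤ dU S x y := by
  have hxy : x ≠ y := fun he => h (by rw [he])
  obtain ⟨s₀, h1, _, h3⟩ := dU_spec hSpos hxy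
  rw [h1]
  by_contra hc
  push_neg at hc
  exact h (h3 t hc)

lemma dU_ultra (hSpos : ∀ s ∈ S, 0 < s) (x y z : US S) :
    dU S x z ≤ max (dU S x y) (dU S y z) := by
  by_cases hxz : x = z
  · rw [hxz, dU_self]
    exact le_max_of_le_left (dU_nonneg hSpos _ _)
  · obtain ⟨s₀, h1, h2, _⟩ := dU_spec hSpos hxz
    rw [h1]
    by_contra hcon
    push_neg at hcon
    have hxy : x.1 s₀ = y.1 s₀ :=
      agree_of_dU_lt hSpos (lt_of_le_of_lt (le_max_left _ _) hcon)
    have hyz : y.1 s₀ = z.1 s₀ :=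
      agree_of_dU_lt hSpos (lt_of_le_of_lt (le_max_right _ _) hcon)
    exact h2 (hxy.trans hyz)

section OrderLemmas

variable {R : US S → US S → Prop}

lemma rel_ne (hr : IsConvexSTO (dU S) R) {a b : US S} (h : R a b) : a ≠ b :=
  fun he => hr.1.1 b (he ▸ h)

lemma ord1 (hSpos : ∀ s ∈ S, 0 < s) (hr : IsConvexSTO (dU S) R) {a b c : US S}
    (h : dU S a b < dU S a c) : R a c ↔ R b c := by
  obtain ⟨⟨hirr, htr, htri⟩, hconv⟩ := hr
  constructor
  · intro hac
    rcases htri b c with h' | h' | h'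
    · exact h'
    · exfalso; rw [h'] at h; exact lt_irrefl _ h
    · exact absurd ((hconv a c b hac h').1) (not_le.2 h)
  · intro hbc
    rcases htri a c with h' | h' | h'
    · exact h'
    · exfalso
      rw [h'] at h
      rw [dU_self] at h
      exact absurd h (not_lt.2 (dU_nonneg hSpos _ _))
    · exfalso
      have h2 := (hconv b c a hbc h').2
      rw [dU_comm c a, dU_comm b a] at h2
      exact absurd h (not_lt.2 h2)

lemma ord2 (hSpos : ∀ s ∈ S, 0 < s) (hr : IsConvexSTO (dU S) R) {a b c : US S}
    (h : dU S a b < dU S c a) : R c a ↔ R c b := by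
  obtain ⟨⟨hirr, htr, htri⟩, hconv⟩ := hr
  constructor
  · intro hca
    rcases htri c b with h' | h' | h'
    · exact h'
    · exfalso
      rw [← h'] at h
      rw [dU_comm a c] at h
      exact lt_irrefl _ h
    · exfalso
      have h2 := (hconv b c a h' hca).2
      rw [dU_comm b a] at h2
      exact absurd h (not_lt.2 h2)
  · intro hcb
    rcases htri c a with h' | h' | h'
    · exact h'
    · exfalso
      rw [h'] at h
      rw [dU_self] at h
      exact absurd h (not_lt.2 (dU_nonneg hSpos _ _))
    · exfalso
      have h2 := (hconv a c b h' hcb).1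
      rw [dU_comm c a] at h
      exact absurd h (not_lt.2 h2)

lemma ball_lt_trans (hSpos : ∀ s ∈ S, 0 < s) (hr : IsConvexSTO (dU S) R)
    {p q u v : US S} (hpq : R p q) (hup : dU S u p < dU S p q)
    (hvq : dU S v q < dU S p q) : R u v := by
  have h1 : dU S p u < dU S p q := by rw [dU_comm p u]; exact hup
  have huq : R u q := (ord1 hSpos hr h1).1 hpq
  have h2 : dU S u q = dU S p q := by
    apply le_antisymm
    · calc dU S u q ≤ max (dU S u p) (dU S p q) := dU_ultra hSpos _ _ _
        _ = dU S p q := max_eq_right (le_of_lt hup)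
    · by_contra hc
      push_neg at hc
      have h3 := dU_ultra hSpos p u q
      exact absurd h3 (not_le.2 (max_lt h1 hc))
  have h5 : dU S q v < dU S u q := by
    rw [h2, dU_comm q v]
    exact hvq
  exact (ord2 hSpos hr h5).1 huq

lemma chain_rel (hr : IsConvexSTO (dU S) R) {x : ℕ → US S} {n : ℕ}
    (hc : ∀ k, k + 1 < n → R (x k) (x (k + 1))) :
    ∀ i j, i < j → j < n → R (x i) (x j) := by
  intro i j hij hjn
  induction j with
  | zero => omega
  | succ j ih =>
    rcases Nat.lt_or_ge i j with h' | h'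
    · exact hr.1.2.1 _ _ _ (ih h' (by omega)) (hc j hjn)
    · have hji : i = j := by omega
      subst hji
      exact hc i hjn

lemma chain_bound (hSpos : ∀ s ∈ S, 0 < s) {x : ℕ → US S} {M : ℝ} :
    ∀ i j, i < j → (∀ k, i ≤ k → k < j → dU S (x k) (x (k + 1)) ≤ M) →
      dU S (x i) (x j) ≤ M := by
  intro i j hij hd
  induction j with
  | zero => omega
  | succ j ih =>
    rcases Nat.lt_or_ge i j with h' | h'
    · have h1 := ih h' (fun k hk1 hk2 => hd k hk1 (by omega))
      have h2 := hd j (by omega) (by omega)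
      calc dU S (x i) (x (j + 1))
          ≤ max (dU S (x i) (x j)) (dU S (x j) (x (j + 1))) := dU_ultra hSpos _ _ _
        _ ≤ M := max_le h1 h2
    · have hji : i = j := by omega
      subst hji
      exact hd i le_rfl (by omega)

lemma chain_conv_lb (hr : IsConvexSTO (dU S) R) {x : ℕ → US S} {n : ℕ}
    (hc : ∀ k, k + 1 < n → R (x k) (x (k + 1))) {i k j : ℕ}
    (hik : i ≤ k) (hkj : k + 1 ≤ j) (hjn : j < n) :
    dU S (x k) (x (k + 1)) ≤ dU S (x i) (x j) := by
  have step1 : dU S (x k) (x (k + 1)) ≤ dU S (x k) (x j) := by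
    rcases eq_or_lt_of_le hkj with h' | h'
    · exact le_of_eq (by rw [h'])
    · have h1 : R (x k) (x (k + 1)) := hc k (by omega)
      have h2 : R (x (k + 1)) (x j) := chain_rel hr hc (k + 1) j h' hjn
      exact (hr.2 _ _ _ h1 h2).1
  rcases eq_or_lt_of_le hik with h' | h'
  · subst h'
    exact step1
  · have h1 : R (x i) (x k) := chain_rel hr hc i k h' (by omega)
    have h2 : R (x k) (x j) := chain_rel hr hc k j (by omega) hjn
    exact le_trans step1 (hr.2 _ _ _ h1 h2).2

end OrderLemmas

section Sorting

lemma exists_min {α : Type*} {R : α → α → Prop}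
    (htri : ∀ a b, R a b ∨ a = b ∨ R b a) (htr : ∀ a b c, R a b → R b c → R a c)
    (s : Finset α) : s.Nonempty → ∃ a ∈ s, ∀ b ∈ s, b ≠ a → R a b := by
  classical
  induction s using Finset.induction_on with
  | empty => intro hs; simp at hs
  | @insert a s ha ih =>
    intro _
    rcases s.eq_empty_or_nonempty with rfl | hsne
    · refine ⟨a, Finset.mem_insert_self a _, ?_⟩
      intro b hb hne
      simp only [Finset.mem_insert, Finset.notMem_empty, or_false] at hb
      exact absurd hb hne
    · obtain ⟨m, hm, hmin⟩ := ih hsne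
      rcases htri a m with h' | h' | h'
      · refine ⟨a, Finset.mem_insert_self a s, ?_⟩
        intro b hb hne
        rcases Finset.mem_insert.1 hb with rfl | hb'
        · exact absurd rfl hne
        · rcases eq_or_ne b m with rfl | hbm
          · exact h'
          · exact htr _ _ _ h' (hmin b hb' hbm)
      · subst h'
        exact absurd hm ha
      · refine ⟨m, Finset.mem_insert_of_mem hm, ?_⟩
        intro b hb hne
        rcases Finset.mem_insert.1 hb with rfl | hb'
        · exact h'
        · exact hmin b hb' hne

lemma exists_sorted {α : Type*} [Nonempty α] {R : α → α → Prop}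
    (htri : ∀ a b, R a b ∨ a = b ∨ R b a) (htr : ∀ a b c, R a b → R b c → R a c)
    (s : Finset α) : ∃ x : ℕ → α, (∀ i, i < s.card → x i ∈ s) ∧
      (∀ a ∈ s, ∃ i, i < s.card ∧ x i = a) ∧
      (∀ i j, i < j → j < s.card → R (x i) (x j)) := by
  classical
  suffices H : ∀ n (s : Finset α), s.card = n → ∃ x : ℕ → α,
      (∀ i, i < s.card → x i ∈ s) ∧ (∀ a ∈ s, ∃ i, i < s.card ∧ x i = a) ∧
      (∀ i j, i < j → j < s.card → R (x i) (x j)) by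
    exact H s.card s rfl
  intro n
  induction n using Nat.strong_induction_on with
  | _ n IH =>
    intro s hcard
    rcases s.eq_empty_or_nonempty with rfl | hne
    · refine ⟨fun _ => Classical.arbitrary α, ?_, ?_, ?_⟩
      · intro i hi; simp at hi
      · intro a haa; simp at haa
      · intro i j _ hj; simp at hj
    · obtain ⟨m, hm, hmin⟩ := exists_min htri htr s hne
      have hn1 : 1 ≤ n := by
        rw [← hcard]
        exact Finset.card_pos.2 hne
      have hcard' : (s.erase m).card = n - 1 := by
        rw [Finset.card_erase_of_mem hm, hcard]
      obtain ⟨x', h1, h2, h3⟩ := IH (n - 1) (by omega) (s.erase m) hcard'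
      rw [hcard'] at h1 h2 h3
      refine ⟨fun k => if k = 0 then m else x' (k - 1), ?_, ?_, ?_⟩
      · intro i hi
        show (if i = 0 then m else x' (i - 1)) ∈ s
        by_cases h0 : i = 0
        · rw [if_pos h0]; exact hm
        · rw [if_neg h0]
          refine Finset.mem_of_mem_erase (h1 (i - 1) ?_)
          rw [hcard] at hi
          omega
      · intro a haa
        by_cases ham : a = m
        · refine ⟨0, ?_, ?_⟩
          · rw [hcard]; omega
          · show (if 0 = 0 then m else x' (0 - 1)) = a
            rw [if_pos rfl, ham]
        · obtain ⟨i, hi, hix⟩ := h2 a (Finset.mem_erase.2 ⟨ham, haa⟩)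
          refine ⟨i + 1, ?_, ?_⟩
          · rw [hcard]; omega
          · show (if i + 1 = 0 then m else x' (i + 1 - 1)) = a
            rw [if_neg (Nat.succ_ne_zero i)]
            simpa using hix
      · intro i j hij hj
        rw [hcard] at hj
        show R (if i = 0 then m else x' (i - 1)) (if j = 0 then m else x' (j - 1))
        rw [if_neg (by omega : ¬ j = 0)]
        by_cases h0 : i = 0
        · rw [if_pos h0]
          have hmem : x' (j - 1) ∈ s.erase m := h1 (j - 1) (by omega)
          exact hmin _ (Finset.mem_of_mem_erase hmem) (Finset.ne_of_mem_erase hmem)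
        · rw [if_neg h0]
          exact h3 (i - 1) (j - 1) (by omega) (by omega)

end Sorting

section Swap

variable {hSpos' : True}

/-- Pointwise sum in `U_S`. -/
noncomputable def addU (hSpos : ∀ s ∈ S, 0 < s) (x y : US S) : US S :=
  ⟨fun s => x.1 s + y.1 s, ussupp_mono hSpos x.2 y.2 (by
    intro s hs
    by_contra hc
    push_neg at hc
    exact hs (by rw [hc.1, hc.2, add_zero]))⟩

/-- Pointwise difference in `U_S`. -/
noncomputable def subU (hSpos : ∀ s ∈ S, 0 < s) (x y : US S) : US S :=
  ⟨fun s => x.1 s - y.1 s, ussupp_mono hSpos x.2 y.2 (by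
    intro s hs
    by_contra hc
    push_neg at hc
    exact hs (by rw [hc.1, hc.2, sub_zero]))⟩

/-- `z` belongs to the ball of all points agreeing with `c` at levels `≥ u`. -/
def inBall (c z : US S) (u : ℝ) : Prop := ∀ t : S, u ≤ (t : ℝ) → z.1 t = c.1 t

/-- The map swapping the two balls at level `d(c₁,c₂)` around `c₁` and `c₂`. -/
noncomputable def swapAux (hSpos : ∀ s ∈ S, 0 < s) (c₁ c₂ : US S) (z : US S) : US S :=
  if inBall c₁ z (dU S c₁ c₂) then addU hSpos z (subU hSpos c₂ c₁)
  else if inBall c₂ z (dU S c₁ c₂) then subU hSpos z (subU hSpos c₂ c₁)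
  else z

variable {hSpos'' : True}

lemma ball_disj (hSpos : ∀ s ∈ S, 0 < s) {c₁ c₂ : US S} (hu : (0:ℝ) < dU S c₁ c₂) {z : US S}
    (h1 : inBall c₁ z (dU S c₁ c₂)) (h2 : inBall c₂ z (dU S c₁ c₂)) : False := by
  have hne' : c₁ ≠ c₂ := by
    intro he
    rw [he, dU_self] at hu
    exact lt_irrefl _ hu
  obtain ⟨su, hsu, hsud, _⟩ := dU_spec hSpos hne'
  have e1 : z.1 su = c₁.1 su := h1 su (le_of_eq hsu)
  have e2 : z.1 su = c₂.1 su := h2 su (le_of_eq hsu)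
  exact hsud (e1 ▸ e2)

lemma w_zero (hSpos : ∀ s ∈ S, 0 < s) {c₁ c₂ : US S} {t : S} (ht : dU S c₁ c₂ < (t:ℝ)) : c₂.1 t - c₁.1 t = 0 := by
  rw [agree_of_dU_lt hSpos ht]
  ring

lemma ball_move (hSpos : ∀ s ∈ S, 0 < s) {c₁ c₂ : US S} {z : US S} (h1 : inBall c₁ z (dU S c₁ c₂)) :
    inBall c₂ (addU hSpos z (subU hSpos c₂ c₁)) (dU S c₁ c₂) := by
  intro t ht
  show z.1 t + (c₂.1 t - c₁.1 t) = c₂.1 t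
  rw [h1 t ht]
  ring

lemma ball_move' (hSpos : ∀ s ∈ S, 0 < s) {c₁ c₂ : US S} {z : US S} (h2 : inBall c₂ z (dU S c₁ c₂)) :
    inBall c₁ (subU hSpos z (subU hSpos c₂ c₁)) (dU S c₁ c₂) := by
  intro t ht
  show z.1 t - (c₂.1 t - c₁.1 t) = c₁.1 t
  rw [h2 t ht]
  ring

lemma swap_inv (hSpos : ∀ s ∈ S, 0 < s) {c₁ c₂ : US S} (hu : (0:ℝ) < dU S c₁ c₂) (z : US S) :
    swapAux hSpos c₁ c₂ (swapAux hSpos c₁ c₂ z) = z := by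
  by_cases h1 : inBall c₁ z (dU S c₁ c₂)
  · have e1 : swapAux hSpos c₁ c₂ z = addU hSpos z (subU hSpos c₂ c₁) := by
      rw [swapAux, if_pos h1]
    rw [e1]
    have hb2 := ball_move hSpos h1
    have hb1 : ¬ inBall c₁ (addU hSpos z (subU hSpos c₂ c₁)) (dU S c₁ c₂) :=
      fun hb => ball_disj hSpos hu hb hb2
    rw [swapAux, if_neg hb1, if_pos hb2]
    apply Subtype.ext
    funext t
    show z.1 t + (c₂.1 t - c₁.1 t) - (c₂.1 t - c₁.1 t) = z.1 t
    ring
  · by_cases h2 : inBall c₂ z (dU S c₁ c₂)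
    · have e1 : swapAux hSpos c₁ c₂ z = subU hSpos z (subU hSpos c₂ c₁) := by
        rw [swapAux, if_neg h1, if_pos h2]
      rw [e1]
      have hb1 := ball_move' hSpos h2
      rw [swapAux, if_pos hb1]
      apply Subtype.ext
      funext t
      show z.1 t - (c₂.1 t - c₁.1 t) + (c₂.1 t - c₁.1 t) = z.1 t
      ring
    · have e1 : swapAux hSpos c₁ c₂ z = z := by
        rw [swapAux, if_neg h1, if_neg h2]
      rw [e1, e1]

lemma swap_high (hSpos : ∀ s ∈ S, 0 < s) {c₁ c₂ : US S} {z : US S} {t : S} (ht : dU S c₁ c₂ < (t:ℝ)) :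
    (swapAux hSpos c₁ c₂ z).1 t = z.1 t := by
  rw [swapAux]
  split_ifs with h1 h2
  · show z.1 t + (c₂.1 t - c₁.1 t) = z.1 t
    rw [w_zero hSpos ht]
    ring
  · show z.1 t - (c₂.1 t - c₁.1 t) = z.1 t
    rw [w_zero hSpos ht]
    ring
  · rfl

lemma notball_ge (hSpos : ∀ s ∈ S, 0 < s) {c₁ c₂ : US S} {c z : US S} (h : ¬ inBall c z (dU S c₁ c₂)) {z' : US S}
    (h' : inBall c z' (dU S c₁ c₂)) : dU S c₁ c₂ ≤ dU S z' z := by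
  rw [inBall] at h
  push_neg at h
  obtain ⟨t₀, ht₀, hzt⟩ := h
  have hdiff : z'.1 t₀ ≠ z.1 t₀ := by
    rw [h' t₀ ht₀]
    exact fun he => hzt he.symm
  exact le_trans ht₀ (coord_le_dU hSpos hdiff)

lemma swap_le (hSpos : ∀ s ∈ S, 0 < s) {c₁ c₂ : US S} (hu : (0:ℝ) < dU S c₁ c₂) (z z' : US S) :
    dU S (swapAux hSpos c₁ c₂ z) (swapAux hSpos c₁ c₂ z') ≤ dU S z z' := by
  apply dU_le_of_agree hSpos (dU_nonneg hSpos _ _)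
  intro t ht
  have hagt : z.1 t = z'.1 t := agree_of_dU_lt hSpos ht
  by_cases h1 : inBall c₁ z (dU S c₁ c₂) <;> by_cases h1' : inBall c₁ z' (dU S c₁ c₂)
  · rw [swapAux, if_pos h1, swapAux, if_pos h1']
    show z.1 t + (c₂.1 t - c₁.1 t) = z'.1 t + (c₂.1 t - c₁.1 t)
    rw [hagt]
  · have hud : dU S c₁ c₂ ≤ dU S z z' := notball_ge hSpos h1' h1
    have htu : dU S c₁ c₂ < (t:ℝ) := lt_of_le_of_lt hud ht
    rw [swap_high hSpos htu, swap_high hSpos htu, hagt]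
  · have hud : dU S c₁ c₂ ≤ dU S z z' := by
      rw [dU_comm z z']
      exact notball_ge hSpos h1 h1'
    have htu : dU S c₁ c₂ < (t:ℝ) := lt_of_le_of_lt hud ht
    rw [swap_high hSpos htu, swap_high hSpos htu, hagt]
  · by_cases h2 : inBall c₂ z (dU S c₁ c₂) <;> by_cases h2' : inBall c₂ z' (dU S c₁ c₂)
    · rw [swapAux, if_neg h1, if_pos h2, swapAux, if_neg h1', if_pos h2']
      show z.1 t - (c₂.1 t - c₁.1 t) = z'.1 t - (c₂.1 t - c₁.1 t)
      rw [hagt]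
    · have hud : dU S c₁ c₂ ≤ dU S z z' := notball_ge hSpos h2' h2
      have htu : dU S c₁ c₂ < (t:ℝ) := lt_of_le_of_lt hud ht
      rw [swap_high hSpos htu, swap_high hSpos htu, hagt]
    · have hud : dU S c₁ c₂ ≤ dU S z z' := by
        rw [dU_comm z z']
        exact notball_ge hSpos h2 h2'
      have htu : dU S c₁ c₂ < (t:ℝ) := lt_of_le_of_lt hud ht
      rw [swap_high hSpos htu, swap_high hSpos htu, hagt]
    · rw [swapAux, if_neg h1, if_neg h2, swapAux, if_neg h1', if_neg h2']
      exact hagt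

lemma swap_dU (hSpos : ∀ s ∈ S, 0 < s) {c₁ c₂ : US S} (hu : (0:ℝ) < dU S c₁ c₂) (z z' : US S) :
    dU S (swapAux hSpos c₁ c₂ z) (swapAux hSpos c₁ c₂ z') = dU S z z' := by
  have h1 := swap_le hSpos hu z z'
  have h2 := swap_le hSpos hu (swapAux hSpos c₁ c₂ z) (swapAux hSpos c₁ c₂ z')
  rw [swap_inv hSpos hu, swap_inv hSpos hu] at h2
  exact le_antisymm h1 h2

/-- The swap isometry. -/
noncomputable def swapIso (hSpos : ∀ s ∈ S, 0 < s) {c₁ c₂ : US S} (hne : c₁ ≠ c₂) : IsoU S :=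
  ⟨⟨swapAux hSpos c₁ c₂, swapAux hSpos c₁ c₂,
    fun z => swap_inv hSpos (dU_pos hSpos hne) z,
    fun z => swap_inv hSpos (dU_pos hSpos hne) z⟩,
    fun z z' => swap_dU hSpos (dU_pos hSpos hne) z z'⟩

lemma swap_maps (hSpos : ∀ s ∈ S, 0 < s) {c₁ c₂ : US S} (hne : c₁ ≠ c₂) : (swapIso hSpos hne).1 c₁ = c₂ := by
  show swapAux hSpos c₁ c₂ c₁ = c₂
  have hb : inBall c₁ c₁ (dU S c₁ c₂) := fun t _ => rfl
  rw [swapAux, if_pos hb]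
  apply Subtype.ext
  funext t
  show c₁.1 t + (c₂.1 t - c₁.1 t) = c₂.1 t
  ring

lemma swap_fix (hSpos : ∀ s ∈ S, 0 < s) {c₁ c₂ : US S} (hne : c₁ ≠ c₂) {z : US S}
    (h1 : dU S c₁ c₂ ≤ dU S z c₁) (h2 : dU S c₁ c₂ ≤ dU S z c₂) :
    (swapIso hSpos hne).1 z = z := by
  have hu : (0:ℝ) < dU S c₁ c₂ := dU_pos hSpos hne
  have hb1 : ¬ inBall c₁ z (dU S c₁ c₂) := by
    intro hb
    have := dU_lt_of_agree_ge hSpos hu (fun t ht => hb t ht)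
    exact absurd h1 (not_le.2 this)
  have hb2 : ¬ inBall c₂ z (dU S c₁ c₂) := by
    intro hb
    have := dU_lt_of_agree_ge hSpos hu (fun t ht => hb t ht)
    exact absurd h2 (not_le.2 this)
  show swapAux hSpos c₁ c₂ z = z
  rw [swapAux, if_neg hb1, if_neg hb2]

end Swap

section Extend

noncomputable def isoId : IsoU S := ⟨Equiv.refl _, fun _ _ => rfl⟩

noncomputable def isoComp (g h : IsoU S) : IsoU S :=
  ⟨h.1.trans g.1, fun x y => by
    simp only [Equiv.trans_apply]
    rw [g.2, h.2]⟩

lemma extend_iso (hSpos : ∀ s ∈ S, 0 < s) :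
    ∀ (n : ℕ) (a b : ℕ → US S),
    (∀ i j, i < n → j < n → dU S (a i) (a j) = dU S (b i) (b j)) →
    ∃ g : IsoU S, ∀ i, i < n → g.1 (a i) = b i := by
  intro n
  induction n with
  | zero => exact fun a b _ => ⟨isoId, fun i hi => absurd hi (by omega)⟩
  | succ n ih =>
    intro a b hd
    obtain ⟨h, hh⟩ := ih a b (fun i j hi hj => hd i j (by omega) (by omega))
    by_cases heq : h.1 (a n) = b n
    · refine ⟨h, fun i hi => ?_⟩
      rcases Nat.lt_or_ge i n with h' | h'
      · exact hh i h'
      · have hin : i = n := by omega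
        subst hin
        exact heq
    · refine ⟨isoComp (swapIso hSpos heq) h, fun i hi => ?_⟩
      rcases Nat.lt_or_ge i n with h' | h'
      · show (swapIso hSpos heq).1 (h.1 (a i)) = b i
        rw [hh i h']
        have e1 : dU S (b i) (h.1 (a n)) = dU S (b i) (b n) := by
          calc dU S (b i) (h.1 (a n)) = dU S (h.1 (a i)) (h.1 (a n)) := by rw [hh i h']
            _ = dU S (a i) (a n) := h.2 _ _
            _ = dU S (b i) (b n) := hd i n (by omega) (by omega)
        have e2 : dU S (h.1 (a n)) (b n) ≤ dU S (b i) (b n) := by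
          have h3 := dU_ultra hSpos (h.1 (a n)) (b i) (b n)
          rw [dU_comm (h.1 (a n)) (b i), e1, max_self] at h3
          exact h3
        apply swap_fix
        · rw [e1]
          exact e2
        · exact e2
      · have hin : i = n := by omega
        show (swapIso hSpos heq).1 (h.1 (a i)) = b i
        rw [hin]
        exact swap_maps hSpos heq

end Extend

section Ptq

/-- The point of `U_S` equal to `c` above level `M`, with value `q` at `M`, `0` below. -/
noncomputable def ptq (hSpos : ∀ s ∈ S, 0 < s) (hacc : ∀ ε > 0, ∃ s ∈ S, s < ε)
    (c : US S) {M : ℝ} (hM : M ∈ S) (q : ℚ) : US S :=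
  ⟨fun t => if (t:ℝ) = M then q else if M < (t:ℝ) then c.1 t else 0, by
    have hδ : USsupp S (fun t : S => if (t:ℝ) = M then (1:ℚ) else 0) := by
      obtain ⟨f, h1, h2, h3, h4⟩ := exists_base hSpos hacc hM
      refine ⟨f, h1, h2, h3, ?_⟩
      intro s hs
      by_cases he : (s:ℝ) = M
      · exact ⟨0, by rw [he, h4]⟩
      · exact absurd (show (if (s:ℝ) = M then (1:ℚ) else 0) = 0 by rw [if_neg he]) hs
    apply ussupp_mono hSpos c.2 hδ
    intro s hs
    by_cases he : (s:ℝ) = M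
    · right
      rw [if_pos he]
      exact one_ne_zero
    · left
      rw [if_neg he] at hs
      by_cases hlt : M < (s:ℝ)
      · rw [if_pos hlt] at hs
        exact hs
      · rw [if_neg hlt] at hs
        exact absurd rfl hs⟩

variable (hSpos : ∀ s ∈ S, 0 < s) (hacc : ∀ ε > 0, ∃ s ∈ S, s < ε)

lemma ptq_at (c : US S) {M : ℝ} (hM : M ∈ S) (q : ℚ) :
    (ptq hSpos hacc c hM q).1 ⟨M, hM⟩ = q := if_pos rfl

lemma ptq_above (c : US S) {M : ℝ} (hM : M ∈ S) (q : ℚ) {t : S} (ht : M < (t:ℝ)) :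
    (ptq hSpos hacc c hM q).1 t = c.1 t := by
  show (if (t:ℝ) = M then q else if M < (t:ℝ) then c.1 t else 0) = c.1 t
  rw [if_neg (ne_of_gt ht), if_pos ht]

lemma ptq_inj (c : US S) {M : ℝ} (hM : M ∈ S) {q q' : ℚ}
    (h : ptq hSpos hacc c hM q = ptq hSpos hacc c hM q') : q = q' := by
  have h1 := ptq_at hSpos hacc c hM q
  rw [h] at h1
  rw [ptq_at hSpos hacc c hM q'] at h1
  exact h1.symm

lemma ptq_dU (c : US S) {M : ℝ} (hM : M ∈ S) {q q' : ℚ} (hq : q ≠ q') :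
    dU S (ptq hSpos hacc c hM q) (ptq hSpos hacc c hM q') = M := by
  have := dU_eq_coord hSpos (x := ptq hSpos hacc c hM q) (y := ptq hSpos hacc c hM q')
    (s₀ := ⟨M, hM⟩) (by rw [ptq_at, ptq_at]; exact hq)
    (by intro t ht
        rw [ptq_above hSpos hacc c hM q ht, ptq_above hSpos hacc c hM q' ht])
  exact this

lemma exists_supply {R : US S → US S → Prop} (hr : IsConvexSTO (dU S) R)
    (c : US S) {M : ℝ} (hM : M ∈ S) (n : ℕ) :
    ∃ qv : ℕ → ℚ, ∀ i j, i < j → j < n →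
      R (ptq hSpos hacc c hM (qv i)) (ptq hSpos hacc c hM (qv j)) := by
  have htri : ∀ a b : ℚ, (R (ptq hSpos hacc c hM a) (ptq hSpos hacc c hM b)) ∨ a = b ∨
      (R (ptq hSpos hacc c hM b) (ptq hSpos hacc c hM a)) := by
    intro a b
    rcases hr.1.2.2 (ptq hSpos hacc c hM a) (ptq hSpos hacc c hM b) with h | h | h
    · exact Or.inl h
    · exact Or.inr (Or.inl (ptq_inj hSpos hacc c hM h))
    · exact Or.inr (Or.inr h)
  have htr : ∀ a b d : ℚ, R (ptq hSpos hacc c hM a) (ptq hSpos hacc c hM b) →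
      R (ptq hSpos hacc c hM b) (ptq hSpos hacc c hM d) →
      R (ptq hSpos hacc c hM a) (ptq hSpos hacc c hM d) :=
    fun a b d hab hbd => hr.1.2.1 _ _ _ hab hbd
  obtain ⟨x, _, _, h3⟩ := exists_sorted htri htr ((Finset.range n).image (Nat.cast : ℕ → ℚ))
  have hcard : ((Finset.range n).image (Nat.cast : ℕ → ℚ)).card = n := by
    rw [Finset.card_image_of_injective _ Nat.cast_injective, Finset.card_range]
  exact ⟨x, fun i j hij hj => h3 i j hij (by rw [hcard]; exact hj)⟩

end Ptq

section Core

lemma core (hSpos : ∀ s ∈ S, 0 < s) (hacc : ∀ ε > 0, ∃ s ∈ S, s < ε)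
    {R R' : US S → US S → Prop} (hr : IsConvexSTO (dU S) R) (hr' : IsConvexSTO (dU S) R') :
    ∀ n : ℕ, ∀ x : ℕ → US S, (∀ k, k + 1 < n → R' (x k) (x (k + 1))) →
    ∀ M : ℝ, ∀ hM : M ∈ S, (∀ k, k + 1 < n → dU S (x k) (x (k + 1)) ≤ M) →
    ∀ c : US S, ∀ qv : ℕ → ℚ,
    (∀ i j, i < j → j < n → R (ptq hSpos hacc c hM (qv i)) (ptq hSpos hacc c hM (qv j))) →
    ∃ a : ℕ → US S,
      (∀ k, k + 1 < n → R (a k) (a (k + 1))) ∧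
      (∀ i j, i < j → j < n → dU S (a i) (a j) = dU S (x i) (x j)) ∧
      (∀ i, i < n → ∀ t : S, M < (t:ℝ) → (a i).1 t = c.1 t) ∧
      (∀ i, i < n → ∃ j, j ≤ i ∧ (a i).1 ⟨M, hM⟩ = qv j) := by
  intro n
  induction n using Nat.strong_induction_on with
  | _ n IH =>
  intro x hx M hM hd c qv hqv
  by_cases h0 : n = 0
  · subst h0
    exact ⟨fun _ => c, fun k hk => by omega, fun i j _ hj => by omega,
      fun i hi => by omega, fun i hi => by omega⟩
  by_cases h1 : n = 1
  · subst h1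
    refine ⟨fun _ => ptq hSpos hacc c hM (qv 0), fun k hk => by omega,
      fun i j hij hj => by omega, ?_, ?_⟩
    · intro i _ t ht
      exact ptq_above hSpos hacc c hM (qv 0) ht
    · intro i _
      exact ⟨0, Nat.zero_le i, ptq_at hSpos hacc c hM (qv 0)⟩
  have hn2 : 2 ≤ n := by omega
  -- the maximal consecutive distance
  set d : ℕ → ℝ := fun k => dU S (x k) (x (k + 1)) with hdd
  have hrangene : (Finset.range (n - 1)).Nonempty := ⟨0, Finset.mem_range.2 (by omega)⟩
  obtain ⟨k_m, hk_m_mem, hk_m⟩ := Finset.exists_max_image (Finset.range (n - 1)) d hrangene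
  have hk_m_lt : k_m < n - 1 := Finset.mem_range.1 hk_m_mem
  set M₂ : ℝ := d k_m with hM₂def
  have hxne : x k_m ≠ x (k_m + 1) := rel_ne hr' (hx k_m (by omega))
  have hM₂S : M₂ ∈ S := dU_mem_S hSpos hxne
  have hM₂pos : (0:ℝ) < M₂ := dU_pos hSpos hxne
  have hM₂le : M₂ ≤ M := hd k_m (by omega)
  have hmax : ∀ k, k < n - 1 → d k ≤ M₂ := fun k hk => hk_m k (Finset.mem_range.2 hk)
  have hex : ∃ k, k < n - 1 ∧ d k = M₂ := ⟨k_m, hk_m_lt, rfl⟩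
  set kst := Nat.find hex with hkstdef
  obtain ⟨hkst_lt, hkst_eq⟩ := Nat.find_spec hex
  have hbefore : ∀ i, i < kst → d i < M₂ := by
    intro i hi
    have h' := Nat.find_min hex hi
    have hi2 : i < n - 1 := by omega
    rcases lt_or_eq_of_le (hmax i hi2) with h | h
    · exact h
    · exact absurd ⟨hi2, h⟩ h'
  -- the common construction at exact level M₂
  have MAIN : ∀ (c₀ : US S) (qv₀ : ℕ → ℚ),
      (∀ i j, i < j → j < n →
        R (ptq hSpos hacc c₀ hM₂S (qv₀ i)) (ptq hSpos hacc c₀ hM₂S (qv₀ j))) →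
      ∃ a : ℕ → US S,
        (∀ k, k + 1 < n → R (a k) (a (k + 1))) ∧
        (∀ i j, i < j → j < n → dU S (a i) (a j) = dU S (x i) (x j)) ∧
        (∀ i, i < n → ∀ t : S, M₂ < (t:ℝ) → (a i).1 t = c₀.1 t) ∧
        (∀ i, i < n → ∃ j, j ≤ i ∧ (a i).1 ⟨M₂, hM₂S⟩ = qv₀ j) := by
    intro c₀ qv₀ hqv₀
    have hqvne : ∀ j, 0 < j → j < n → qv₀ 0 ≠ qv₀ j := by
      intro j hj0 hjn he
      exact rel_ne hr (hqv₀ 0 j hj0 hjn) (by rw [he])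
    -- left part
    have hML : ∃ ML, ML ∈ S ∧ ML < M₂ ∧ ∀ k, k < kst → d k ≤ ML := by
      by_cases hk0 : kst = 0
      · obtain ⟨s', hs'S, hs'lt⟩ := hacc M₂ hM₂pos
        exact ⟨s', hs'S, hs'lt, fun k hk => by omega⟩
      · have hrne : (Finset.range kst).Nonempty := ⟨0, Finset.mem_range.2 (by omega)⟩
        obtain ⟨k_l, hk_l_mem, hk_l⟩ := Finset.exists_max_image (Finset.range kst) d hrne
        have hk_l_lt : k_l < kst := Finset.mem_range.1 hk_l_mem
        have hxnel : x k_l ≠ x (k_l + 1) := rel_ne hr' (hx k_l (by omega))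
        exact ⟨d k_l, dU_mem_S hSpos hxnel, hbefore k_l hk_l_lt,
          fun k hk => hk_l k (Finset.mem_range.2 hk)⟩
    obtain ⟨ML, hMLS, hMLlt, hdL⟩ := hML
    set c_L := ptq hSpos hacc c₀ hM₂S (qv₀ 0) with hcL
    obtain ⟨qvL, hqvL⟩ := exists_supply hSpos hacc hr c_L hMLS (kst + 1)
    obtain ⟨aL, hL1, hL2, hL3, hL4⟩ := IH (kst + 1) (by omega) x
      (fun k hk => hx k (by omega)) ML hMLS (fun k hk => hdL k (by omega)) c_L qvL hqvL
    have haLhigh : ∀ i, i ≤ kst → ∀ t : S, M₂ < (t:ℝ) → (aL i).1 t = c₀.1 t := by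
      intro i hi t ht
      rw [hL3 i (by omega) t (lt_trans hMLlt ht)]
      exact ptq_above hSpos hacc c₀ hM₂S (qv₀ 0) ht
    have haLat : ∀ i, i ≤ kst → (aL i).1 ⟨M₂, hM₂S⟩ = qv₀ 0 := by
      intro i hi
      have hcoord : ML < ((⟨M₂, hM₂S⟩ : S) : ℝ) := hMLlt
      rw [hL3 i (by omega) ⟨M₂, hM₂S⟩ hcoord]
      exact ptq_at hSpos hacc c₀ hM₂S (qv₀ 0)
    -- right part
    obtain ⟨aR, hR1, hR2, hR3, hR4⟩ := IH (n - (kst + 1)) (by omega)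
      (fun i => x (kst + 1 + i)) (fun k hk => hx (kst + 1 + k) (by omega))
      M₂ hM₂S (fun k hk => hmax (kst + 1 + k) (by omega)) c₀
      (fun i => qv₀ (kst + 1 + i))
      (fun i j hij hj => hqv₀ (kst + 1 + i) (kst + 1 + j) (by omega) (by omega))
    have haRat : ∀ m, m < n - (kst + 1) → ∃ j, kst + 1 ≤ j ∧ j ≤ kst + 1 + m ∧
        (aR m).1 ⟨M₂, hM₂S⟩ = qv₀ j := by
      intro m hm
      obtain ⟨j', hj'le, hj'val⟩ := hR4 m hm
      exact ⟨kst + 1 + j', by omega, by omega, hj'val⟩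
    -- glue
    set g : ℕ → US S := fun i => if i ≤ kst then aL i else aR (i - (kst + 1)) with hgdef
    have hA : ∀ i, i ≤ kst → g i = aL i := fun i hi => if_pos hi
    have hB : ∀ i, kst < i → g i = aR (i - (kst + 1)) := fun i hi => if_neg (by omega)
    have hhigh : ∀ i, i < n → ∀ t : S, M₂ < (t:ℝ) → (g i).1 t = c₀.1 t := by
      intro i hi t ht
      rcases le_or_gt i kst with h | h
      · rw [hA i h]
        exact haLhigh i h t ht
      · rw [hB i h]
        exact hR3 (i - (kst + 1)) (by omega) t ht
    have hvL : ∀ i, i ≤ kst → (g i).1 ⟨M₂, hM₂S⟩ = qv₀ 0 := by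
      intro i hi
      rw [hA i hi]
      exact haLat i hi
    have hvR : ∀ i, kst < i → i < n → ∃ j, kst + 1 ≤ j ∧ j ≤ i ∧
        (g i).1 ⟨M₂, hM₂S⟩ = qv₀ j := by
      intro i hi hin
      rw [hB i hi]
      obtain ⟨j, hj1, hj2, hj3⟩ := haRat (i - (kst + 1)) (by omega)
      exact ⟨j, hj1, by omega, hj3⟩
    -- cross distances
    have hcross : ∀ i j, i ≤ kst → kst < j → j < n → dU S (g i) (g j) = M₂ := by
      intro i j hi hj hjn
      obtain ⟨j', hj'1, hj'2, hj'3⟩ := hvR j hj hjn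
      have := dU_eq_coord hSpos (x := g i) (y := g j) (s₀ := ⟨M₂, hM₂S⟩)
        (by rw [hvL i hi, hj'3]; exact hqvne j' (by omega) (by omega))
        (by intro t ht
            rw [hhigh i (by omega) t ht, hhigh j hjn t ht])
      exact this
    have hxcross : ∀ i j, i ≤ kst → kst < j → j < n → dU S (x i) (x j) = M₂ := by
      intro i j hi hj hjn
      apply le_antisymm
      · exact chain_bound hSpos i j (by omega) (fun k hk1 hk2 => hmax k (by omega))
      · calc M₂ = d kst := hkst_eq.symm
          _ ≤ dU S (x i) (x j) := chain_conv_lb hr' hx hi (by omega) hjn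
    refine ⟨g, ?_, ?_, hhigh, ?_⟩
    · -- consecutive order
      intro k hk
      rcases lt_trichotomy k kst with h | h | h
      · rw [hA k (by omega), hA (k + 1) (by omega)]
        exact hL1 k (by omega)
      · rw [h]
        rw [hA kst le_rfl, hB (kst + 1) (by omega)]
        have hR0 : (aR (kst + 1 - (kst + 1))).1 ⟨M₂, hM₂S⟩ = qv₀ (kst + 1) := by
          obtain ⟨j, hj1, hj2, hj3⟩ := haRat (kst + 1 - (kst + 1)) (by omega)
          have hj : j = kst + 1 := by omega
          rw [hj] at hj3
          exact hj3
        apply ball_lt_trans hSpos hr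
          (p := ptq hSpos hacc c₀ hM₂S (qv₀ 0)) (q := ptq hSpos hacc c₀ hM₂S (qv₀ (kst + 1)))
          (hqv₀ 0 (kst + 1) (by omega) (by omega))
        · rw [ptq_dU hSpos hacc c₀ hM₂S (hqvne (kst + 1) (by omega) (by omega))]
          apply dU_lt_of_agree_ge hSpos hM₂pos
          intro t ht
          rcases eq_or_lt_of_le ht with he | hlt
          · have hteq : t = ⟨M₂, hM₂S⟩ := Subtype.ext he.symm
            subst hteq
            rw [haLat kst le_rfl, ptq_at]
          · rw [haLhigh kst le_rfl t hlt, ptq_above hSpos hacc c₀ hM₂S (qv₀ 0) hlt]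
        · rw [ptq_dU hSpos hacc c₀ hM₂S (hqvne (kst + 1) (by omega) (by omega))]
          apply dU_lt_of_agree_ge hSpos hM₂pos
          intro t ht
          rcases eq_or_lt_of_le ht with he | hlt
          · have hteq : t = ⟨M₂, hM₂S⟩ := Subtype.ext he.symm
            subst hteq
            rw [hR0, ptq_at]
          · rw [hR3 (kst + 1 - (kst + 1)) (by omega) t hlt,
              ptq_above hSpos hacc c₀ hM₂S (qv₀ (kst + 1)) hlt]
      · rw [hB k h, hB (k + 1) (by omega)]
        have harg : k + 1 - (kst + 1) = (k - (kst + 1)) + 1 := by omega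
        rw [harg]
        exact hR1 (k - (kst + 1)) (by omega)
    · -- distance matrix
      intro i j hij hjn
      rcases le_or_gt j kst with h | h
      · rw [hA i (by omega), hA j h]
        exact hL2 i j hij (by omega)
      · rcases le_or_gt i kst with h' | h'
        · rw [hcross i j h' h hjn, hxcross i j h' h hjn]
        · rw [hB i h', hB j (by omega)]
          have h2 := hR2 (i - (kst + 1)) (j - (kst + 1)) (by omega) (by omega)
          have hi' : kst + 1 + (i - (kst + 1)) = i := by omega
          have hj' : kst + 1 + (j - (kst + 1)) = j := by omega
          rw [hi', hj'] at h2
          exact h2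
    · -- value at level M₂
      intro i hin
      rcases le_or_gt i kst with h | h
      · exact ⟨0, Nat.zero_le i, hvL i h⟩
      · obtain ⟨j, hj1, hj2, hj3⟩ := hvR i h hin
        exact ⟨j, hj2, hj3⟩
  -- now dispatch on whether M₂ = M or M₂ < M
  rcases eq_or_lt_of_le hM₂le with hMM | hMM
  · -- exact level
    obtain ⟨a, ha1, ha2, ha3, ha4⟩ := MAIN c qv (by
      intro i j hij hj
      have := hqv i j hij hj
      -- ptq with hM vs hM₂S : M = M₂
      convert this using 3 <;> rw [hMM]
      )
    refine ⟨a, ha1, ha2, ?_, ?_⟩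
    · intro i hi t ht
      exact ha3 i hi t (by rw [hMM]; exact ht)
    · intro i hi
      obtain ⟨j, hj1, hj2⟩ := ha4 i hi
      refine ⟨j, hj1, ?_⟩
      have hco : (⟨M, hM⟩ : S) = ⟨M₂, hM₂S⟩ := Subtype.ext hMM.symm
      rw [hco]
      exact hj2
  · -- slack : wrap in one ball at level M
    set c₀ := ptq hSpos hacc c hM (qv 0) with hc₀
    obtain ⟨qv₀, hqv₀⟩ := exists_supply hSpos hacc hr c₀ hM₂S n
    obtain ⟨a, ha1, ha2, ha3, ha4⟩ := MAIN c₀ qv₀ hqv₀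
    refine ⟨a, ha1, ha2, ?_, ?_⟩
    · intro i hi t ht
      rw [ha3 i hi t (lt_trans hMM ht)]
      exact ptq_above hSpos hacc c hM (qv 0) ht
    · intro i hi
      refine ⟨0, Nat.zero_le i, ?_⟩
      have hco : M₂ < ((⟨M, hM⟩ : S) : ℝ) := hMM
      rw [ha3 i hi ⟨M, hM⟩ hco]
      exact ptq_at hSpos hacc c hM (qv 0)

end Core

section Box

lemma box_of_open {A B : Type*} (O : Set (A → B → Bool)) (hO : IsOpen O)
    (h₀ : A → B → Bool) (hmem : h₀ ∈ O) :
    ∃ t : Finset (A × B), ∀ h : A → B → Bool,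
      (∀ p ∈ t, h p.1 p.2 = h₀ p.1 p.2) → h ∈ O := by
  classical
  obtain ⟨I, u, hu, hsub⟩ := isOpen_pi_iff.1 hO h₀ hmem
  have step : ∀ a ∈ I, ∃ (J : Finset B) (v : B → Set Bool),
      (∀ b ∈ J, IsOpen (v b) ∧ h₀ a b ∈ v b) ∧ (J : Set B).pi v ⊆ u a := by
    intro a ha
    exact isOpen_pi_iff.1 (hu a ha).1 (h₀ a) (hu a ha).2
  choose! J v hJv hJsub using step
  refine ⟨I.biUnion (fun a => (J a).image (Prod.mk a)), ?_⟩
  intro h hagree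
  apply hsub
  intro a ha
  have haI : a ∈ I := ha
  apply hJsub a haI
  intro b hb
  have hbJ : b ∈ J a := hb
  have hab : (a, b) ∈ I.biUnion (fun a => (J a).image (Prod.mk a)) :=
    Finset.mem_biUnion.2 ⟨a, haI, Finset.mem_image.2 ⟨b, hbJ, rfl⟩⟩
  have he := hagree (a, b) hab
  show h a b ∈ v a b
  rw [he]
  exact (hJv a haI b hbJ).2

end Box

end CLOUProof

/-- Every orbit of the action of `iso(U_S)` on `cLO(U_S)` is dense: the flow
`cLO(U_S)` is minimal. -/
theorem cLOU_minimal_flow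
    (S : Set ℝ) (hScount : S.Countable) (hSpos : ∀ s ∈ S, 0 < s)
    (hacc : ∀ ε > 0, ∃ s ∈ S, s < ε) :
    ∀ r : cLOU S, Dense (Set.range fun g : IsoU S => actU S g r) := by
  classical
  intro r r'
  rw [mem_closure_iff]
  intro o ho hro
  obtain ⟨O, hO, hOo⟩ : ∃ O : Set (US S → US S → Bool),
      IsOpen O ∧ Subtype.val ⁻¹' O = o := isOpen_induced_iff.1 ho
  have hr'O : r'.1 ∈ O := by rw [← hOo] at hro; exact hro
  obtain ⟨t, ht⟩ := CLOUProof.box_of_open O hO r'.1 hr'O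
  set pts : Finset (US S) := t.biUnion (fun p => {p.1, p.2}) with hpts
  haveI : Nonempty (US S) := ⟨⟨fun _ => 0, CLOUProof.ussupp_zero hSpos hacc⟩⟩
  obtain ⟨x, hx1, hx2, hx3⟩ := CLOUProof.exists_sorted
    (R := fun a b : US S => r'.1 a b = true)
    (fun a b => r'.2.1.2.2 a b) (fun a b c => r'.2.1.2.1 a b c) pts
  set m := pts.card with hm
  have hchain : ∀ k, k + 1 < m → r'.1 (x k) (x (k + 1)) = true :=
    fun k hk => hx3 k (k + 1) (by omega) hk
  have hMex : ∃ M, M ∈ S ∧ ∀ k, k + 1 < m → dU S (x k) (x (k + 1)) ≤ M := by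
    by_cases hm2 : 2 ≤ m
    · obtain ⟨k_m, hmem, hmax⟩ := Finset.exists_max_image (Finset.range (m - 1))
        (fun k => dU S (x k) (x (k + 1))) ⟨0, Finset.mem_range.2 (by omega)⟩
      have hkm := Finset.mem_range.1 hmem
      have hxne : x k_m ≠ x (k_m + 1) :=
        CLOUProof.rel_ne r'.2 (hchain k_m (by omega))
      exact ⟨_, CLOUProof.dU_mem_S hSpos hxne,
        fun k hk => hmax k (Finset.mem_range.2 (by omega))⟩
    · obtain ⟨s', hs', _⟩ := hacc 1 one_pos
      exact ⟨s', hs', fun k hk => by omega⟩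
  obtain ⟨M, hMS, hMbd⟩ := hMex
  set c0 : US S := ⟨fun _ => 0, CLOUProof.ussupp_zero hSpos hacc⟩ with hc0
  obtain ⟨qv, hqv⟩ := CLOUProof.exists_supply hSpos hacc r.2 c0 hMS m
  obtain ⟨a, ha1, ha2, _, _⟩ :=
    CLOUProof.core hSpos hacc r.2 r'.2 m x hchain M hMS hMbd c0 qv hqv
  have hmat : ∀ i j, i < m → j < m → dU S (a i) (a j) = dU S (x i) (x j) := by
    intro i j hi hj
    rcases lt_trichotomy i j with h | h | h
    · exact ha2 i j h hj
    · rw [h, CLOUProof.dU_self, CLOUProof.dU_self]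
    · rw [CLOUProof.dU_comm (a i) (a j), CLOUProof.dU_comm (x i) (x j)]
      exact ha2 j i h hi
  obtain ⟨g, hg⟩ := CLOUProof.extend_iso hSpos m a x hmat
  refine ⟨actU S g r, ?_, ⟨g, rfl⟩⟩
  rw [← hOo]
  show (actU S g r).1 ∈ O
  apply ht
  intro p hp
  have hp1 : p.1 ∈ pts := Finset.mem_biUnion.2 ⟨p, hp, by simp⟩
  have hp2 : p.2 ∈ pts := Finset.mem_biUnion.2 ⟨p, hp, by simp⟩
  obtain ⟨i, hi, hxi⟩ := hx2 p.1 hp1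
  obtain ⟨j, hj, hxj⟩ := hx2 p.2 hp2
  have hsymm : ∀ i, i < m → g.1.symm (x i) = a i := by
    intro i hi
    rw [← hg i hi]
    exact g.1.symm_apply_apply (a i)
  show r.1 (g.1.symm p.1) (g.1.symm p.2) = r'.1 p.1 p.2
  rw [← hxi, ← hxj, hsymm i hi, hsymm j hj]
  rcases lt_trichotomy i j with h | h | h
  · have h1 : r.1 (a i) (a j) = true := CLOUProof.chain_rel r.2 ha1 i j h hj
    have h2 : r'.1 (x i) (x j) = true := hx3 i j h hj
    rw [h1, h2]
  · have hf1 : r.1 (a i) (a j) = false := by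
      rw [h]
      cases hb : r.1 (a j) (a j)
      · rfl
      · exact absurd hb (r.2.1.1 (a j))
    have hf2 : r'.1 (x i) (x j) = false := by
      rw [h]
      cases hb : r'.1 (x j) (x j)
      · rfl
      · exact absurd hb (r'.2.1.1 (x j))
    rw [hf1, hf2]
  · have h1 : r.1 (a j) (a i) = true := CLOUProof.chain_rel r.2 ha1 j i h hi
    have h2 : r'.1 (x j) (x i) = true := hx3 j i h hi
    have hf1 : r.1 (a i) (a j) = false := by
      cases hb : r.1 (a i) (a j)
      · rfl
      · exact absurd (r.2.1.2.1 _ _ _ hb h1) (r.2.1.1 (a i))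
    have hf2 : r'.1 (x i) (x j) = false := by
      cases hb : r'.1 (x i) (x j)
      · rfl
      · exact absurd (r'.2.1.2.1 _ _ _ hb h2) (r'.2.1.1 (x i))
    rw [hf1, hf2]
end
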